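/- arXiv:2404.04246 — 2 statements merged into one kernel-verified Lean document; each statement's English description precedes it below -/
import Mathlib

section
/- In the symmetric group S₄ with simple transpositions s₁,s₂,s₃, let v₁ = s₁s₂s₃ and v₂ = s₂s₁s₃, J₁ = {s₁}, J₂ = {s₂}. Then both lower Bruhat intervals [e,v₁] and [e,v₂] are isomorphic to the Boolean lattice B₃, |A^{J₁}_{e,v₁}| = |A^{J₂}_{e,v₂}| = 2, but P^{J₁,-1}_{e,v₁} = 1 while P^{J₂,-1}_{e,v₂} = 1 + q. -/
open Polynomial

namespace KL

variable {B W : Type*} [Group W] {M : CoxeterMatrix B}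

/-- Bruhat order on a Coxeter group: reflexive-transitive closure of right
multiplication by a reflection that increases length. -/
def BruhatLE (cs : CoxeterSystem M W) : W → W → Prop :=
  Relation.ReflTransGen (fun x y =>
    ∃ t, cs.IsReflection t ∧ y = x * t ∧ cs.length x < cs.length y)

def BruhatLT (cs : CoxeterSystem M W) (x y : W) : Prop :=
  BruhatLE cs x y ∧ x ≠ y

/-- Covering relation of Bruhat order. -/
def BruhatCovBy (cs : CoxeterSystem M W) (x y : W) : Prop :=
  BruhatLT cs x y ∧ ∀ z, BruhatLT cs x z → BruhatLT cs z y → False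

/-- The Bruhat interval `[u, v]`. -/
def BruhatInterval (cs : CoxeterSystem M W) (u v : W) : Set W :=
  {y | BruhatLE cs u y ∧ BruhatLE cs y v}

/-- The standard parabolic subgroup `W_J`. -/
def ParabolicSubgroup (cs : CoxeterSystem M W) (J : Set B) : Subgroup W :=
  Subgroup.closure (cs.simple '' J)

/-- `w` is the minimal-length representative of its coset `w * W_J`,
i.e. `w ∈ Wᴶ`. -/
def IsMinRep (cs : CoxeterSystem M W) (J : Set B) (w : W) : Prop :=
  ∀ x ∈ ParabolicSubgroup cs J, cs.length w ≤ cs.length (w * x)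

/-- The set `Aᴶ_{u,v}` of atoms of `[u,v]` lying in `Wᴶ`. -/
def AtomSet (cs : CoxeterSystem M W) (J : Set B) (u v : W) : Set W :=
  {a | IsMinRep cs J a ∧ BruhatCovBy cs u a ∧ BruhatLE cs a v}

/-- The parabolic quotient interval `[u,v]ᴶ = [u,v] ∩ Wᴶ`. -/
def QuotInterval (cs : CoxeterSystem M W) (J : Set B) (u v : W) : Set W :=
  {y | IsMinRep cs J y ∧ BruhatLE cs u y ∧ BruhatLE cs y v}

/-- The family of ordinary Kazhdan–Lusztig `R`-polynomials, characterized by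
its defining recursion. -/
def IsRFamily (cs : CoxeterSystem M W) (R : W → W → Polynomial ℤ) : Prop :=
  (∀ u v, ¬ BruhatLE cs u v → R u v = 0) ∧
  (∀ u, R u u = 1) ∧
  (∀ (i : B) (u v : W), cs.length (cs.simple i * v) < cs.length v →
    (cs.length (cs.simple i * u) < cs.length u →
      R u v = R (cs.simple i * u) (cs.simple i * v)) ∧
    (cs.length u < cs.length (cs.simple i * u) →
      R u v = (X - 1) * R u (cs.simple i * v)
            + X * R (cs.simple i * u) (cs.simple i * v)))

/-- The family of ordinary Kazhdan–Lusztig polynomials `P_{u,v}`, characterized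
by its defining properties, relative to a family `R` of `R`-polynomials. -/
def IsPFamily (cs : CoxeterSystem M W) (R P : W → W → Polynomial ℤ) : Prop :=
  (∀ u v, ¬ BruhatLE cs u v → P u v = 0) ∧
  (∀ u, P u u = 1) ∧
  (∀ u v, BruhatLT cs u v →
    2 * (P u v).natDegree + 1 ≤ cs.length v - cs.length u) ∧
  (∀ u v, BruhatLE cs u v →
    (P u v).reflect (cs.length v - cs.length u) =
      ∑ᶠ σ ∈ BruhatInterval cs u v, R u σ * P σ v)

/-- The family of parabolic `R`-polynomials `R^{J,x}_{u,v}` of Deodhar,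
characterized by its defining recursion. -/
def IsParaRFamily (cs : CoxeterSystem M W) (J : Set B) (x : Polynomial ℤ)
    (R : W → W → Polynomial ℤ) : Prop :=
  (∀ u v, IsMinRep cs J u → IsMinRep cs J v → ¬ BruhatLE cs u v → R u v = 0) ∧
  (∀ u, IsMinRep cs J u → R u u = 1) ∧
  (∀ (i : B) (u v : W), IsMinRep cs J u → IsMinRep cs J v →
    cs.length (cs.simple i * v) < cs.length v →
    (cs.length (cs.simple i * u) < cs.length u →
      R u v = R (cs.simple i * u) (cs.simple i * v)) ∧
    (cs.length u < cs.length (cs.simple i * u) →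
      IsMinRep cs J (cs.simple i * u) →
      R u v = (X - 1) * R u (cs.simple i * v)
            + X * R (cs.simple i * u) (cs.simple i * v)) ∧
    (cs.length u < cs.length (cs.simple i * u) →
      ¬ IsMinRep cs J (cs.simple i * u) →
      R u v = (X - 1 - x) * R u (cs.simple i * v)))

/-- The family of parabolic Kazhdan–Lusztig polynomials `P^{J,x}_{u,v}` of
Deodhar, characterized by its defining properties, relative to a family `R`
of parabolic `R`-polynomials. -/
def IsParaPFamily (cs : CoxeterSystem M W) (J : Set B)
    (R P : W → W → Polynomial ℤ) : Prop :=
  (∀ u v, IsMinRep cs J u → IsMinRep cs J v → ¬ BruhatLE cs u v → P u v = 0) ∧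
  (∀ u, IsMinRep cs J u → P u u = 1) ∧
  (∀ u v, IsMinRep cs J u → IsMinRep cs J v → BruhatLT cs u v →
    2 * (P u v).natDegree + 1 ≤ cs.length v - cs.length u) ∧
  (∀ u v, IsMinRep cs J u → IsMinRep cs J v → BruhatLE cs u v →
    (P u v).reflect (cs.length v - cs.length u) =
      ∑ᶠ σ ∈ QuotInterval cs J u v, R u σ * P σ v)


-- ===================== auxiliary development =====================
section Aux

variable {B W : Type*} [Group W] {M : CoxeterMatrix B}

theorem bruhat_le_cases {cs : CoxeterSystem M W} {u v : W} (h : BruhatLE cs u v) :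
    u = v ∨ cs.length u < cs.length v := by
  induction h with
  | refl => exact Or.inl rfl
  | tail _ hstep ih =>
    obtain ⟨t, _, rfl, hlen⟩ := hstep
    rcases ih with rfl | ih
    · exact Or.inr hlen
    · exact Or.inr (ih.trans hlen)

theorem bruhat_lt_length {cs : CoxeterSystem M W} {u v : W} (h : BruhatLT cs u v) :
    cs.length u < cs.length v := (bruhat_le_cases h.1).resolve_left h.2

theorem bruhat_le_length {cs : CoxeterSystem M W} {u v : W} (h : BruhatLE cs u v) :
    cs.length u ≤ cs.length v := by
  rcases bruhat_le_cases h with rfl | h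
  · exact le_rfl
  · exact h.le

theorem not_bruhat_le_of_length {cs : CoxeterSystem M W} {u v : W} (hne : u ≠ v)
    (hlen : cs.length v ≤ cs.length u) : ¬ BruhatLE cs u v := by
  intro h
  rcases bruhat_le_cases h with rfl | h
  · exact hne rfl
  · omega

theorem bruhat_step {cs : CoxeterSystem M W} {u t : W} (ht : cs.IsReflection t)
    (hlen : cs.length u < cs.length (u * t)) : BruhatLE cs u (u * t) :=
  Relation.ReflTransGen.single ⟨t, ht, rfl, hlen⟩

theorem bruhat_step' {cs : CoxeterSystem M W} {u t v : W} (ht : cs.IsReflection t)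
    (hv : u * t = v) (hlen : cs.length u < cs.length v) : BruhatLE cs u v :=
  hv ▸ bruhat_step ht (hv ▸ hlen)

theorem one_bruhat_le (cs : CoxeterSystem M W) (w : W) : BruhatLE cs 1 w := by
  generalize hn : cs.length w = n
  induction n using Nat.strong_induction_on generalizing w with
  | _ n ih =>
    rcases eq_or_ne w 1 with rfl | hne
    · exact Relation.ReflTransGen.refl
    · obtain ⟨i, hi⟩ := cs.exists_rightDescent_of_ne_one hne
      unfold CoxeterSystem.IsRightDescent at hi
      have key : (w * cs.simple i) * cs.simple i = w := cs.simple_mul_simple_cancel_right i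
      have h1 : BruhatLE cs 1 (w * cs.simple i) :=
        ih (cs.length (w * cs.simple i)) (by omega) _ rfl
      exact h1.tail ⟨cs.simple i, cs.isReflection_simple i, key.symm, key ▸ hi⟩

theorem bruhat_gap1 {cs : CoxeterSystem M W} {u v : W} (h : BruhatLE cs u v) (hne : u ≠ v)
    (hlen : cs.length v ≤ cs.length u + 1) : cs.IsReflection (u⁻¹ * v) := by
  rcases (Relation.ReflTransGen.cases_head h) with rfl | ⟨w, hstep, hwv⟩
  · exact absurd rfl hne
  · obtain ⟨t, ht, rfl, hl⟩ := hstep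
    rcases bruhat_le_cases hwv with rfl | hl2
    · simpa using ht
    · omega

lemma mem_closure_involution {g x : W} (hg : g * g = 1) (hx : x ∈ Subgroup.closure {g}) :
    x = 1 ∨ x = g := by
  induction hx using Subgroup.closure_induction with
  | mem y hy => exact Or.inr hy
  | one => exact Or.inl rfl
  | mul y z _ _ hy hz =>
    rcases hy with rfl | rfl <;> rcases hz with rfl | rfl <;> simp [hg]
  | inv y _ hy =>
    rcases hy with rfl | rfl
    · simp
    · right; rw [inv_eq_iff_mul_eq_one, hg]

lemma isMinRep_singleton_iff (cs : CoxeterSystem M W) (i : B) (w : W) :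
    IsMinRep cs {i} w ↔ cs.length w ≤ cs.length (w * cs.simple i) := by
  constructor
  · intro h
    exact h (cs.simple i) (Subgroup.subset_closure (by simp))
  · intro h x hx
    rw [ParabolicSubgroup, Set.image_singleton] at hx
    rcases mem_closure_involution (cs.simple_mul_simple_self i) hx with rfl | rfl
    · simp
    · exact h

end Aux

-- ===================== the concrete S₄ model =====================

def tau (i : Fin 3) : Equiv.Perm (Fin 4) := Equiv.swap i.castSucc i.succ

lemma tau_liftable : CoxeterMatrix.IsLiftable (CoxeterMatrix.Aₙ 3) tau := by
  intro i j; fin_cases i <;> fin_cases j <;> decide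

def tw (ω : List (Fin 3)) : Equiv.Perm (Fin 4) := (ω.map tau).prod

def allWords : ℕ → List (List (Fin 3))
  | 0 => [[]]
  | n+1 => [] :: (allWords n).flatMap (fun ω => (List.finRange 3).map (· :: ω))

lemma mem_allWords : ∀ (n : ℕ) (ω : List (Fin 3)), ω.length ≤ n → ω ∈ allWords n := by
  intro n
  induction n with
  | zero =>
    intro ω h
    interval_cases h2 : ω.length
    rw [List.length_eq_zero_iff] at *
    simp [h2, allWords]
  | succ n ih =>
    intro ω h
    cases ω with
    | nil => simp [allWords]
    | cons i ω' =>
      simp only [allWords, List.mem_cons, List.mem_flatMap, List.mem_map]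
      exact Or.inr ⟨ω', ih ω' (by simpa using h), i, by simp, rfl⟩

section Model

variable {W : Type*} [Group W] (cs : CoxeterSystem (CoxeterMatrix.Aₙ 3) W)

local prefix:100 "π" => cs.wordProd

noncomputable def phi : W →* Equiv.Perm (Fin 4) := cs.lift ⟨tau, tau_liftable⟩

lemma phi_simple (i : Fin 3) : phi cs (cs.simple i) = tau i :=
  cs.lift_apply_simple tau_liftable i

lemma phi_wordProd (ω : List (Fin 3)) : phi cs (π ω) = tw ω := by
  induction ω with
  | nil => simp [tw]
  | cons i ω ih =>
    rw [cs.wordProd_cons, map_mul, phi_simple, tw, List.map_cons, List.prod_cons, ← tw, ih]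

lemma word_ne (ω ω' : List (Fin 3)) (h : tw ω ≠ tw ω') : π ω ≠ π ω' := by
  intro he
  apply h
  rw [← phi_wordProd cs, ← phi_wordProd cs, he]

lemma length_word (ω₀ : List (Fin 3))
    (h : ∀ ω ∈ allWords (ω₀.length - 1), ω.length < ω₀.length → tw ω ≠ tw ω₀) :
    cs.length (π ω₀) = ω₀.length := by
  refine le_antisymm (cs.length_wordProd_le ω₀) ?_
  by_contra hlt
  push_neg at hlt
  obtain ⟨ω, hlen, hw⟩ := cs.exists_reduced_word (π ω₀)
  have hmem : ω ∈ allWords (ω₀.length - 1) := mem_allWords _ _ (by rw [CoxeterSystem.IsReduced, ← hw] at hlen; omega)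
  exact h ω hmem (by rw [CoxeterSystem.IsReduced, ← hw] at hlen; omega) (by rw [← phi_wordProd cs, ← phi_wordProd cs, ← hw])

lemma not_isReflection_word (ω : List (Fin 3))
    (h : ∀ (g : Equiv.Perm (Fin 4)) (i : Fin 3), g * tau i * g⁻¹ ≠ tw ω) :
    ¬ cs.IsReflection (π ω) := by
  rintro ⟨w, i, hw⟩
  apply h (phi cs w) i
  rw [← phi_simple cs, ← map_inv, ← map_mul, ← map_mul, ← hw, phi_wordProd]

lemma not_isReflection_word' (t : W) (ω : List (Fin 3)) (ht : t = π ω)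
    (h : ∀ (g : Equiv.Perm (Fin 4)) (i : Fin 3), g * tau i * g⁻¹ ≠ tw ω) :
    ¬ cs.IsReflection t := ht ▸ not_isReflection_word cs ω h

lemma comm02 : cs.simple 2 * cs.simple 0 = cs.simple 0 * cs.simple 2 := by
  have h : (cs.simple 0 * cs.simple 2) ^ (CoxeterMatrix.Aₙ 3 0 2) = 1 :=
    cs.simple_mul_simple_pow 0 2
  have h2 : (CoxeterMatrix.Aₙ 3 : Fin 3 → Fin 3 → ℕ) 0 2 = 2 := by decide
  rw [h2, sq] at h
  calc cs.simple 2 * cs.simple 0 = (cs.simple 0 * cs.simple 2)⁻¹ := by simp [mul_inv_rev]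
  _ = cs.simple 0 * cs.simple 2 := by rw [inv_eq_iff_mul_eq_one]; exact h

lemma pi_nil : (π [] : W) = 1 := cs.wordProd_nil

end Model
section Facts

variable {W : Type*} [Group W] (cs : CoxeterSystem (CoxeterMatrix.Aₙ 3) W)

local prefix:100 "π" => cs.wordProd

-- length facts
@[simp] lemma len_nil : cs.length (π []) = 0 := length_word cs [] (by decide)
@[simp] lemma len_0 : cs.length (π [0]) = 1 := length_word cs [0] (by decide)
@[simp] lemma len_1 : cs.length (π [1]) = 1 := length_word cs [1] (by decide)
@[simp] lemma len_2 : cs.length (π [2]) = 1 := length_word cs [2] (by decide)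
@[simp] lemma len_01 : cs.length (π [0,1]) = 2 := length_word cs [0,1] (by decide)
@[simp] lemma len_10 : cs.length (π [1,0]) = 2 := length_word cs [1,0] (by decide)
@[simp] lemma len_02 : cs.length (π [0,2]) = 2 := length_word cs [0,2] (by decide)
@[simp] lemma len_20 : cs.length (π [2,0]) = 2 := length_word cs [2,0] (by decide)
@[simp] lemma len_12 : cs.length (π [1,2]) = 2 := length_word cs [1,2] (by decide)
@[simp] lemma len_21 : cs.length (π [2,1]) = 2 := length_word cs [2,1] (by decide)
@[simp] lemma len_012 : cs.length (π [0,1,2]) = 3 := length_word cs [0,1,2] (by decide)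
@[simp] lemma len_102 : cs.length (π [1,0,2]) = 3 := length_word cs [1,0,2] (by decide)
@[simp] lemma len_010 : cs.length (π [0,1,0]) = 3 := length_word cs [0,1,0] (by decide)
@[simp] lemma len_101 : cs.length (π [1,0,1]) = 3 := length_word cs [1,0,1] (by decide)
@[simp] lemma len_121 : cs.length (π [1,2,1]) = 3 := length_word cs [1,2,1] (by decide)
@[simp] lemma len_021 : cs.length (π [0,2,1]) = 3 := length_word cs [0,2,1] (by decide)
@[simp] lemma len_120 : cs.length (π [1,2,0]) = 3 := length_word cs [1,2,0] (by decide)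
@[simp] lemma len_0120 : cs.length (π [0,1,2,0]) = 4 := length_word cs [0,1,2,0] (by decide)
@[simp] lemma len_1021 : cs.length (π [1,0,2,1]) = 4 := length_word cs [1,0,2,1] (by decide)

@[simp] lemma len_one : cs.length (1 : W) = 0 := cs.length_one

-- minimal representative facts, J = {0}
lemma mr0_e : IsMinRep cs {0} (1 : W) := by
  rw [isMinRep_singleton_iff]
  have : (1 : W) * cs.simple 0 = π [0] := by simp [cs.wordProd_cons]
  rw [this]; simp

lemma mr0_b : IsMinRep cs {0} (π [1]) := by
  rw [isMinRep_singleton_iff]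
  have : π [1] * cs.simple 0 = π [1,0] := by simp [cs.wordProd_cons, mul_assoc]
  rw [this]; simp

lemma mr0_c : IsMinRep cs {0} (π [2]) := by
  rw [isMinRep_singleton_iff]
  have : π [2] * cs.simple 0 = π [2,0] := by simp [cs.wordProd_cons, mul_assoc]
  rw [this]; simp

lemma mr0_ab : IsMinRep cs {0} (π [0,1]) := by
  rw [isMinRep_singleton_iff]
  have : π [0,1] * cs.simple 0 = π [0,1,0] := by simp [cs.wordProd_cons, mul_assoc]
  rw [this]; simp

lemma mr0_bc : IsMinRep cs {0} (π [1,2]) := by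
  rw [isMinRep_singleton_iff]
  have : π [1,2] * cs.simple 0 = π [1,2,0] := by simp [cs.wordProd_cons, mul_assoc]
  rw [this]; simp

lemma mr0_abc : IsMinRep cs {0} (π [0,1,2]) := by
  rw [isMinRep_singleton_iff]
  have : π [0,1,2] * cs.simple 0 = π [0,1,2,0] := by simp [cs.wordProd_cons, mul_assoc]
  rw [this]; simp

lemma not_mr0_a : ¬ IsMinRep cs {0} (π [0]) := by
  rw [isMinRep_singleton_iff]
  have : π [0] * cs.simple 0 = 1 := by simp [cs.wordProd_cons]
  rw [this]; simp

lemma not_mr0_ac : ¬ IsMinRep cs {0} (π [0,2]) := by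
  rw [isMinRep_singleton_iff]
  have : π [0,2] * cs.simple 0 = π [2] := by
    simp [cs.wordProd_cons, mul_assoc, comm02 cs]
  rw [this]; simp

-- minimal representative facts, J = {1}
lemma mr1_e : IsMinRep cs {1} (1 : W) := by
  rw [isMinRep_singleton_iff]
  have : (1 : W) * cs.simple 1 = π [1] := by simp [cs.wordProd_cons]
  rw [this]; simp

lemma mr1_a : IsMinRep cs {1} (π [0]) := by
  rw [isMinRep_singleton_iff]
  have : π [0] * cs.simple 1 = π [0,1] := by simp [cs.wordProd_cons, mul_assoc]
  rw [this]; simp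

lemma mr1_c : IsMinRep cs {1} (π [2]) := by
  rw [isMinRep_singleton_iff]
  have : π [2] * cs.simple 1 = π [2,1] := by simp [cs.wordProd_cons, mul_assoc]
  rw [this]; simp

lemma mr1_ba : IsMinRep cs {1} (π [1,0]) := by
  rw [isMinRep_singleton_iff]
  have : π [1,0] * cs.simple 1 = π [1,0,1] := by simp [cs.wordProd_cons, mul_assoc]
  rw [this]; simp

lemma mr1_bc : IsMinRep cs {1} (π [1,2]) := by
  rw [isMinRep_singleton_iff]
  have : π [1,2] * cs.simple 1 = π [1,2,1] := by simp [cs.wordProd_cons, mul_assoc]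
  rw [this]; simp

lemma mr1_ac : IsMinRep cs {1} (π [0,2]) := by
  rw [isMinRep_singleton_iff]
  have : π [0,2] * cs.simple 1 = π [0,2,1] := by simp [cs.wordProd_cons, mul_assoc]
  rw [this]; simp

lemma mr1_bac : IsMinRep cs {1} (π [1,0,2]) := by
  rw [isMinRep_singleton_iff]
  have : π [1,0,2] * cs.simple 1 = π [1,0,2,1] := by simp [cs.wordProd_cons, mul_assoc]
  rw [this]; simp

lemma not_mr1_b : ¬ IsMinRep cs {1} (π [1]) := by
  rw [isMinRep_singleton_iff]
  have : π [1] * cs.simple 1 = 1 := by simp [cs.wordProd_cons]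
  rw [this]; simp

end Facts
section Facts2

variable {W : Type*} [Group W] (cs : CoxeterSystem (CoxeterMatrix.Aₙ 3) W)

local prefix:100 "π" => cs.wordProd

-- reflections
lemma refl_s (i : Fin 3) : cs.IsReflection (π [i]) := by
  rw [cs.wordProd_singleton]; exact cs.isReflection_simple i

lemma refl_aba : cs.IsReflection (π [0,1,0]) :=
  ⟨cs.simple 0, 1, by simp [cs.wordProd_cons, mul_assoc]⟩

lemma refl_bab : cs.IsReflection (π [1,0,1]) :=
  ⟨cs.simple 1, 0, by simp [cs.wordProd_cons, mul_assoc]⟩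

lemma refl_cbc : cs.IsReflection (π [2,1,2]) :=
  ⟨cs.simple 2, 1, by simp [cs.wordProd_cons, mul_assoc]⟩

lemma refl_cbabc : cs.IsReflection (π [2,1,0,1,2]) :=
  ⟨π [2,1], 0, by simp [cs.wordProd_cons, mul_assoc]⟩

lemma refl_cabac : cs.IsReflection (π [2,0,1,0,2]) :=
  ⟨π [2,0], 1, by simp [cs.wordProd_cons, mul_assoc]⟩

-- positive Bruhat facts
lemma le_step_word (ω ωt ωv : List (Fin 3)) (hrefl : cs.IsReflection (π ωt))
    (hmul : π ω * π ωt = π ωv) (h1 : cs.length (π ω) < cs.length (π ωv)) :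
    BruhatLE cs (π ω) (π ωv) := bruhat_step' hrefl hmul h1

lemma le_a_ab : BruhatLE cs (π [0]) (π [0,1]) :=
  le_step_word cs [0] [1] [0,1] (refl_s cs 1) (cs.wordProd_append [0] [1]).symm (by simp)

lemma le_a_ac : BruhatLE cs (π [0]) (π [0,2]) :=
  le_step_word cs [0] [2] [0,2] (refl_s cs 2) (cs.wordProd_append [0] [2]).symm (by simp)

lemma le_b_ab : BruhatLE cs (π [1]) (π [0,1]) :=
  le_step_word cs [1] [1,0,1] [0,1] (refl_bab cs)
    (by simp [cs.wordProd_cons, mul_assoc]) (by simp)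

lemma le_b_bc : BruhatLE cs (π [1]) (π [1,2]) :=
  le_step_word cs [1] [2] [1,2] (refl_s cs 2) (cs.wordProd_append [1] [2]).symm (by simp)

lemma le_c_ac : BruhatLE cs (π [2]) (π [0,2]) :=
  le_step_word cs [2] [0] [0,2] (refl_s cs 0)
    (by simp [cs.wordProd_cons, mul_assoc, comm02 cs]) (by simp)

lemma le_c_bc : BruhatLE cs (π [2]) (π [1,2]) :=
  le_step_word cs [2] [2,1,2] [1,2] (refl_cbc cs)
    (by simp [cs.wordProd_cons, mul_assoc]) (by simp)

lemma le_ab_abc : BruhatLE cs (π [0,1]) (π [0,1,2]) :=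
  le_step_word cs [0,1] [2] [0,1,2] (refl_s cs 2)
    (cs.wordProd_append [0,1] [2]).symm (by simp)

lemma le_ac_abc : BruhatLE cs (π [0,2]) (π [0,1,2]) :=
  le_step_word cs [0,2] [2,1,2] [0,1,2] (refl_cbc cs)
    (by simp [cs.wordProd_cons, mul_assoc]) (by simp)

lemma le_bc_abc : BruhatLE cs (π [1,2]) (π [0,1,2]) :=
  le_step_word cs [1,2] [2,1,0,1,2] [0,1,2] (refl_cbabc cs)
    (by simp [cs.wordProd_cons, mul_assoc]) (by simp)

lemma le_a_abc : BruhatLE cs (π [0]) (π [0,1,2]) := (le_a_ab cs).trans (le_ab_abc cs)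
lemma le_b_abc : BruhatLE cs (π [1]) (π [0,1,2]) := (le_b_ab cs).trans (le_ab_abc cs)
lemma le_c_abc : BruhatLE cs (π [2]) (π [0,1,2]) := (le_c_ac cs).trans (le_ac_abc cs)

lemma le_a_ba : BruhatLE cs (π [0]) (π [1,0]) :=
  le_step_word cs [0] [0,1,0] [1,0] (refl_aba cs)
    (by simp [cs.wordProd_cons, mul_assoc]) (by simp)

lemma le_b_ba : BruhatLE cs (π [1]) (π [1,0]) :=
  le_step_word cs [1] [0] [1,0] (refl_s cs 0) (cs.wordProd_append [1] [0]).symm (by simp)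

lemma le_ba_bac : BruhatLE cs (π [1,0]) (π [1,0,2]) :=
  le_step_word cs [1,0] [2] [1,0,2] (refl_s cs 2)
    (cs.wordProd_append [1,0] [2]).symm (by simp)

lemma le_bc_bac : BruhatLE cs (π [1,2]) (π [1,0,2]) :=
  le_step_word cs [1,2] [0] [1,0,2] (refl_s cs 0)
    (by simp [cs.wordProd_cons, mul_assoc, comm02 cs]) (by simp)

lemma le_ac_bac : BruhatLE cs (π [0,2]) (π [1,0,2]) :=
  le_step_word cs [0,2] [2,0,1,0,2] [1,0,2] (refl_cabac cs)
    (by simp [cs.wordProd_cons, mul_assoc]) (by simp)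

lemma le_a_bac : BruhatLE cs (π [0]) (π [1,0,2]) := (le_a_ba cs).trans (le_ba_bac cs)
lemma le_b_bac : BruhatLE cs (π [1]) (π [1,0,2]) := (le_b_ba cs).trans (le_ba_bac cs)
lemma le_c_bac : BruhatLE cs (π [2]) (π [1,0,2]) := (le_c_bc cs).trans (le_bc_bac cs)

-- negative Bruhat facts via the gap-one lemma
lemma not_le_gap1 (ω ων : List (Fin 3)) (hne : tw ω ≠ tw ων)
    (hlen : cs.length (π ων) ≤ cs.length (π ω) + 1)
    (hrefl : ∀ (g : Equiv.Perm (Fin 4)) (i : Fin 3), g * tau i * g⁻¹ ≠ tw (ω.reverse ++ ων)) :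
    ¬ BruhatLE cs (π ω) (π ων) := by
  intro h
  exact not_isReflection_word' cs _ (ω.reverse ++ ων)
    (by rw [cs.wordProd_append, cs.wordProd_reverse]) hrefl
    (bruhat_gap1 h (word_ne cs _ _ hne) hlen)

lemma nle_a_bc : ¬ BruhatLE cs (π [0]) (π [1,2]) :=
  not_le_gap1 cs [0] [1,2] (by decide) (by simp) (by decide)

lemma nle_b_ac : ¬ BruhatLE cs (π [1]) (π [0,2]) :=
  not_le_gap1 cs [1] [0,2] (by decide) (by simp) (by decide)

lemma nle_c_ab : ¬ BruhatLE cs (π [2]) (π [0,1]) :=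
  not_le_gap1 cs [2] [0,1] (by decide) (by simp) (by decide)

lemma nle_c_ba : ¬ BruhatLE cs (π [2]) (π [1,0]) :=
  not_le_gap1 cs [2] [1,0] (by decide) (by simp) (by decide)

end Facts2
section Downset

variable {W : Type*} [Group W] (cs : CoxeterSystem (CoxeterMatrix.Aₙ 3) W)

local prefix:100 "π" => cs.wordProd

lemma mem_downset₁ {y : W} (h : BruhatLE cs y (π [0,1,2])) :
    y = 1 ∨ y = π [0] ∨ y = π [1] ∨ y = π [2] ∨
    y = π [0,1] ∨ y = π [0,2] ∨ y = π [1,2] ∨ y = π [0,1,2] := by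
  obtain ⟨ω, hlen, hw⟩ := cs.exists_reduced_word y
  subst hw
  rcases bruhat_le_cases h with heq | hlt
  · exact Or.inr (Or.inr (Or.inr (Or.inr (Or.inr (Or.inr (Or.inr heq))))))
  rw [len_012] at hlt
  match ω, hlen with
  | [], _ => exact Or.inl (pi_nil cs)
  | [i], _ =>
    fin_cases i
    · exact Or.inr (Or.inl rfl)
    · exact Or.inr (Or.inr (Or.inl rfl))
    · exact Or.inr (Or.inr (Or.inr (Or.inl rfl)))
  | [i,j], hlen =>
    have hy2 : cs.length (π [i,j]) = 2 := by simpa [CoxeterSystem.IsReduced] using hlen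
    fin_cases i <;> fin_cases j
    · simp [cs.wordProd_cons] at hy2
    · exact Or.inr (Or.inr (Or.inr (Or.inr (Or.inl rfl))))
    · exact Or.inr (Or.inr (Or.inr (Or.inr (Or.inr (Or.inl rfl)))))
    · exact absurd h (not_le_gap1 cs [1,0] [0,1,2] (by decide) (by simp [hy2]) (by decide))
    · simp [cs.wordProd_cons] at hy2
    · exact Or.inr (Or.inr (Or.inr (Or.inr (Or.inr (Or.inr (Or.inl rfl))))))
    · refine Or.inr (Or.inr (Or.inr (Or.inr (Or.inr (Or.inl ?_)))))
      simp [cs.wordProd_cons, comm02 cs]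
    · exact absurd h (not_le_gap1 cs [2,1] [0,1,2] (by decide) (by simp [hy2]) (by decide))
    · simp [cs.wordProd_cons] at hy2
  | (i :: j :: k :: rest), hlen =>
    exfalso
    have : 3 ≤ cs.length (π (i :: j :: k :: rest)) := by
      rw [CoxeterSystem.IsReduced] at hlen; rw [hlen]; simp
    omega

lemma mem_downset₂ {y : W} (h : BruhatLE cs y (π [1,0,2])) :
    y = 1 ∨ y = π [0] ∨ y = π [1] ∨ y = π [2] ∨
    y = π [1,0] ∨ y = π [0,2] ∨ y = π [1,2] ∨ y = π [1,0,2] := by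
  obtain ⟨ω, hlen, hw⟩ := cs.exists_reduced_word y
  subst hw
  rcases bruhat_le_cases h with heq | hlt
  · exact Or.inr (Or.inr (Or.inr (Or.inr (Or.inr (Or.inr (Or.inr heq))))))
  rw [len_102] at hlt
  match ω, hlen with
  | [], _ => exact Or.inl (pi_nil cs)
  | [i], _ =>
    fin_cases i
    · exact Or.inr (Or.inl rfl)
    · exact Or.inr (Or.inr (Or.inl rfl))
    · exact Or.inr (Or.inr (Or.inr (Or.inl rfl)))
  | [i,j], hlen =>
    have hy2 : cs.length (π [i,j]) = 2 := by simpa [CoxeterSystem.IsReduced] using hlen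
    fin_cases i <;> fin_cases j
    · simp [cs.wordProd_cons] at hy2
    · exact absurd h (not_le_gap1 cs [0,1] [1,0,2] (by decide) (by simp [hy2]) (by decide))
    · exact Or.inr (Or.inr (Or.inr (Or.inr (Or.inr (Or.inl rfl)))))
    · exact Or.inr (Or.inr (Or.inr (Or.inr (Or.inl rfl))))
    · simp [cs.wordProd_cons] at hy2
    · exact Or.inr (Or.inr (Or.inr (Or.inr (Or.inr (Or.inr (Or.inl rfl))))))
    · refine Or.inr (Or.inr (Or.inr (Or.inr (Or.inr (Or.inl ?_)))))
      simp [cs.wordProd_cons, comm02 cs]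
    · exact absurd h (not_le_gap1 cs [2,1] [1,0,2] (by decide) (by simp [hy2]) (by decide))
    · simp [cs.wordProd_cons] at hy2
  | (i :: j :: k :: rest), hlen =>
    exfalso
    have : 3 ≤ cs.length (π (i :: j :: k :: rest)) := by
      rw [CoxeterSystem.IsReduced] at hlen; rw [hlen]; simp
    omega

end Downset
section Sets

variable {W : Type*} [Group W] (cs : CoxeterSystem (CoxeterMatrix.Aₙ 3) W)

local prefix:100 "π" => cs.wordProd

lemma one_ne_word (ω : List (Fin 3)) (h : tw [] ≠ tw ω) : (1 : W) ≠ π ω := by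
  rw [← pi_nil cs]; exact word_ne cs [] ω h

-- convenient不等 lemmas
lemma word_ne' (ω ω' : List (Fin 3)) (h : tw ω ≠ tw ω') : π ω ≠ π ω' := word_ne cs ω ω' h

lemma lt_word (ω ω' : List (Fin 3)) (hle : BruhatLE cs (π ω) (π ω')) (h : tw ω ≠ tw ω') :
    BruhatLT cs (π ω) (π ω') := ⟨hle, word_ne cs ω ω' h⟩

lemma QI1_e : QuotInterval cs {0} 1 (π [0,1,2]) =
    {(1:W), π [1], π [2], π [0,1], π [1,2], π [0,1,2]} := by
  ext y
  constructor
  · rintro ⟨hmr, h1y, hyv⟩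
    rcases mem_downset₁ cs hyv with rfl | rfl | rfl | rfl | rfl | rfl | rfl | rfl
    · left; rfl
    · exact absurd hmr (not_mr0_a cs)
    · right; left; rfl
    · right; right; left; rfl
    · right; right; right; left; rfl
    · exact absurd hmr (not_mr0_ac cs)
    · right; right; right; right; left; rfl
    · right; right; right; right; right; rfl
  · intro hy
    rcases hy with rfl | rfl | rfl | rfl | rfl | rfl
    · exact ⟨mr0_e cs, one_bruhat_le cs _, one_bruhat_le cs _⟩
    · exact ⟨mr0_b cs, one_bruhat_le cs _, le_b_abc cs⟩
    · exact ⟨mr0_c cs, one_bruhat_le cs _, le_c_abc cs⟩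
    · exact ⟨mr0_ab cs, one_bruhat_le cs _, le_ab_abc cs⟩
    · exact ⟨mr0_bc cs, one_bruhat_le cs _, le_bc_abc cs⟩
    · exact ⟨mr0_abc cs, one_bruhat_le cs _, Relation.ReflTransGen.refl⟩

lemma QI1_b : QuotInterval cs {0} (π [1]) (π [0,1,2]) =
    {π [1], π [0,1], π [1,2], π [0,1,2]} := by
  ext y
  constructor
  · rintro ⟨hmr, h1y, hyv⟩
    rcases mem_downset₁ cs hyv with rfl | rfl | rfl | rfl | rfl | rfl | rfl | rfl
    · exact absurd h1y (not_bruhat_le_of_length (one_ne_word cs [1] (by decide)).symm (by simp))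
    · exact absurd hmr (not_mr0_a cs)
    · left; rfl
    · exact absurd h1y (not_bruhat_le_of_length (word_ne' cs [1] [2] (by decide)) (by simp))
    · right; left; rfl
    · exact absurd hmr (not_mr0_ac cs)
    · right; right; left; rfl
    · right; right; right; rfl
  · intro hy
    rcases hy with rfl | rfl | rfl | rfl
    · exact ⟨mr0_b cs, Relation.ReflTransGen.refl, le_b_abc cs⟩
    · exact ⟨mr0_ab cs, le_b_ab cs, le_ab_abc cs⟩
    · exact ⟨mr0_bc cs, le_b_bc cs, le_bc_abc cs⟩
    · exact ⟨mr0_abc cs, le_b_abc cs, Relation.ReflTransGen.refl⟩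

lemma QI1_c : QuotInterval cs {0} (π [2]) (π [0,1,2]) =
    {π [2], π [1,2], π [0,1,2]} := by
  ext y
  constructor
  · rintro ⟨hmr, h1y, hyv⟩
    rcases mem_downset₁ cs hyv with rfl | rfl | rfl | rfl | rfl | rfl | rfl | rfl
    · exact absurd h1y (not_bruhat_le_of_length (one_ne_word cs [2] (by decide)).symm (by simp))
    · exact absurd hmr (not_mr0_a cs)
    · exact absurd h1y (not_bruhat_le_of_length (word_ne' cs [2] [1] (by decide)) (by simp))
    · left; rfl
    · exact absurd h1y (nle_c_ab cs)
    · exact absurd hmr (not_mr0_ac cs)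
    · right; left; rfl
    · right; right; rfl
  · intro hy
    rcases hy with rfl | rfl | rfl
    · exact ⟨mr0_c cs, Relation.ReflTransGen.refl, le_c_abc cs⟩
    · exact ⟨mr0_bc cs, le_c_bc cs, le_bc_abc cs⟩
    · exact ⟨mr0_abc cs, le_c_abc cs, Relation.ReflTransGen.refl⟩

lemma QI1_ab : QuotInterval cs {0} (π [0,1]) (π [0,1,2]) =
    {π [0,1], π [0,1,2]} := by
  ext y
  constructor
  · rintro ⟨hmr, h1y, hyv⟩
    rcases mem_downset₁ cs hyv with rfl | rfl | rfl | rfl | rfl | rfl | rfl | rfl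
    · exact absurd h1y (not_bruhat_le_of_length (one_ne_word cs [0,1] (by decide)).symm (by simp))
    · exact absurd hmr (not_mr0_a cs)
    · exact absurd h1y (not_bruhat_le_of_length (word_ne' cs [0,1] [1] (by decide)) (by simp))
    · exact absurd h1y (not_bruhat_le_of_length (word_ne' cs [0,1] [2] (by decide)) (by simp))
    · left; rfl
    · exact absurd hmr (not_mr0_ac cs)
    · exact absurd h1y (not_bruhat_le_of_length (word_ne' cs [0,1] [1,2] (by decide)) (by simp))
    · right; rfl
  · intro hy
    rcases hy with rfl | rfl
    · exact ⟨mr0_ab cs, Relation.ReflTransGen.refl, le_ab_abc cs⟩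
    · exact ⟨mr0_abc cs, le_ab_abc cs, Relation.ReflTransGen.refl⟩

lemma QI1_bc : QuotInterval cs {0} (π [1,2]) (π [0,1,2]) =
    {π [1,2], π [0,1,2]} := by
  ext y
  constructor
  · rintro ⟨hmr, h1y, hyv⟩
    rcases mem_downset₁ cs hyv with rfl | rfl | rfl | rfl | rfl | rfl | rfl | rfl
    · exact absurd h1y (not_bruhat_le_of_length (one_ne_word cs [1,2] (by decide)).symm (by simp))
    · exact absurd hmr (not_mr0_a cs)
    · exact absurd h1y (not_bruhat_le_of_length (word_ne' cs [1,2] [1] (by decide)) (by simp))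
    · exact absurd h1y (not_bruhat_le_of_length (word_ne' cs [1,2] [2] (by decide)) (by simp))
    · exact absurd h1y (not_bruhat_le_of_length (word_ne' cs [1,2] [0,1] (by decide)) (by simp))
    · exact absurd hmr (not_mr0_ac cs)
    · left; rfl
    · right; rfl
  · intro hy
    rcases hy with rfl | rfl
    · exact ⟨mr0_bc cs, Relation.ReflTransGen.refl, le_bc_abc cs⟩
    · exact ⟨mr0_abc cs, le_bc_abc cs, Relation.ReflTransGen.refl⟩

lemma QI2_e : QuotInterval cs {1} 1 (π [1,0,2]) =
    {(1:W), π [0], π [2], π [1,0], π [1,2], π [0,2], π [1,0,2]} := by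
  ext y
  constructor
  · rintro ⟨hmr, h1y, hyv⟩
    rcases mem_downset₂ cs hyv with rfl | rfl | rfl | rfl | rfl | rfl | rfl | rfl
    · left; rfl
    · right; left; rfl
    · exact absurd hmr (not_mr1_b cs)
    · right; right; left; rfl
    · right; right; right; left; rfl
    · right; right; right; right; right; left; rfl
    · right; right; right; right; left; rfl
    · right; right; right; right; right; right; rfl
  · intro hy
    rcases hy with rfl | rfl | rfl | rfl | rfl | rfl | rfl
    · exact ⟨mr1_e cs, one_bruhat_le cs _, one_bruhat_le cs _⟩
    · exact ⟨mr1_a cs, one_bruhat_le cs _, le_a_bac cs⟩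
    · exact ⟨mr1_c cs, one_bruhat_le cs _, le_c_bac cs⟩
    · exact ⟨mr1_ba cs, one_bruhat_le cs _, le_ba_bac cs⟩
    · exact ⟨mr1_bc cs, one_bruhat_le cs _, le_bc_bac cs⟩
    · exact ⟨mr1_ac cs, one_bruhat_le cs _, le_ac_bac cs⟩
    · exact ⟨mr1_bac cs, one_bruhat_le cs _, Relation.ReflTransGen.refl⟩

lemma QI2_a : QuotInterval cs {1} (π [0]) (π [1,0,2]) =
    {π [0], π [1,0], π [0,2], π [1,0,2]} := by
  ext y
  constructor
  · rintro ⟨hmr, h1y, hyv⟩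
    rcases mem_downset₂ cs hyv with rfl | rfl | rfl | rfl | rfl | rfl | rfl | rfl
    · exact absurd h1y (not_bruhat_le_of_length (one_ne_word cs [0] (by decide)).symm (by simp))
    · left; rfl
    · exact absurd hmr (not_mr1_b cs)
    · exact absurd h1y (not_bruhat_le_of_length (word_ne' cs [0] [2] (by decide)) (by simp))
    · right; left; rfl
    · right; right; left; rfl
    · exact absurd h1y (nle_a_bc cs)
    · right; right; right; rfl
  · intro hy
    rcases hy with rfl | rfl | rfl | rfl
    · exact ⟨mr1_a cs, Relation.ReflTransGen.refl, le_a_bac cs⟩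
    · exact ⟨mr1_ba cs, le_a_ba cs, le_ba_bac cs⟩
    · exact ⟨mr1_ac cs, le_a_ac cs, le_ac_bac cs⟩
    · exact ⟨mr1_bac cs, le_a_bac cs, Relation.ReflTransGen.refl⟩

lemma QI2_c : QuotInterval cs {1} (π [2]) (π [1,0,2]) =
    {π [2], π [1,2], π [0,2], π [1,0,2]} := by
  ext y
  constructor
  · rintro ⟨hmr, h1y, hyv⟩
    rcases mem_downset₂ cs hyv with rfl | rfl | rfl | rfl | rfl | rfl | rfl | rfl
    · exact absurd h1y (not_bruhat_le_of_length (one_ne_word cs [2] (by decide)).symm (by simp))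
    · exact absurd h1y (not_bruhat_le_of_length (word_ne' cs [2] [0] (by decide)) (by simp))
    · exact absurd hmr (not_mr1_b cs)
    · left; rfl
    · exact absurd h1y (nle_c_ba cs)
    · right; right; left; rfl
    · right; left; rfl
    · right; right; right; rfl
  · intro hy
    rcases hy with rfl | rfl | rfl | rfl
    · exact ⟨mr1_c cs, Relation.ReflTransGen.refl, le_c_bac cs⟩
    · exact ⟨mr1_bc cs, le_c_bc cs, le_bc_bac cs⟩
    · exact ⟨mr1_ac cs, le_c_ac cs, le_ac_bac cs⟩
    · exact ⟨mr1_bac cs, le_c_bac cs, Relation.ReflTransGen.refl⟩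

lemma QI2_ba : QuotInterval cs {1} (π [1,0]) (π [1,0,2]) =
    {π [1,0], π [1,0,2]} := by
  ext y
  constructor
  · rintro ⟨hmr, h1y, hyv⟩
    rcases mem_downset₂ cs hyv with rfl | rfl | rfl | rfl | rfl | rfl | rfl | rfl
    · exact absurd h1y (not_bruhat_le_of_length (one_ne_word cs [1,0] (by decide)).symm (by simp))
    · exact absurd h1y (not_bruhat_le_of_length (word_ne' cs [1,0] [0] (by decide)) (by simp))
    · exact absurd hmr (not_mr1_b cs)
    · exact absurd h1y (not_bruhat_le_of_length (word_ne' cs [1,0] [2] (by decide)) (by simp))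
    · left; rfl
    · exact absurd h1y (not_bruhat_le_of_length (word_ne' cs [1,0] [0,2] (by decide)) (by simp))
    · exact absurd h1y (not_bruhat_le_of_length (word_ne' cs [1,0] [1,2] (by decide)) (by simp))
    · right; rfl
  · intro hy
    rcases hy with rfl | rfl
    · exact ⟨mr1_ba cs, Relation.ReflTransGen.refl, le_ba_bac cs⟩
    · exact ⟨mr1_bac cs, le_ba_bac cs, Relation.ReflTransGen.refl⟩

lemma QI2_bc : QuotInterval cs {1} (π [1,2]) (π [1,0,2]) =
    {π [1,2], π [1,0,2]} := by
  ext y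
  constructor
  · rintro ⟨hmr, h1y, hyv⟩
    rcases mem_downset₂ cs hyv with rfl | rfl | rfl | rfl | rfl | rfl | rfl | rfl
    · exact absurd h1y (not_bruhat_le_of_length (one_ne_word cs [1,2] (by decide)).symm (by simp))
    · exact absurd h1y (not_bruhat_le_of_length (word_ne' cs [1,2] [0] (by decide)) (by simp))
    · exact absurd hmr (not_mr1_b cs)
    · exact absurd h1y (not_bruhat_le_of_length (word_ne' cs [1,2] [2] (by decide)) (by simp))
    · exact absurd h1y (not_bruhat_le_of_length (word_ne' cs [1,2] [1,0] (by decide)) (by simp))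
    · exact absurd h1y (not_bruhat_le_of_length (word_ne' cs [1,2] [0,2] (by decide)) (by simp))
    · left; rfl
    · right; rfl
  · intro hy
    rcases hy with rfl | rfl
    · exact ⟨mr1_bc cs, Relation.ReflTransGen.refl, le_bc_bac cs⟩
    · exact ⟨mr1_bac cs, le_bc_bac cs, Relation.ReflTransGen.refl⟩

lemma QI2_ac : QuotInterval cs {1} (π [0,2]) (π [1,0,2]) =
    {π [0,2], π [1,0,2]} := by
  ext y
  constructor
  · rintro ⟨hmr, h1y, hyv⟩
    rcases mem_downset₂ cs hyv with rfl | rfl | rfl | rfl | rfl | rfl | rfl | rfl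
    · exact absurd h1y (not_bruhat_le_of_length (one_ne_word cs [0,2] (by decide)).symm (by simp))
    · exact absurd h1y (not_bruhat_le_of_length (word_ne' cs [0,2] [0] (by decide)) (by simp))
    · exact absurd hmr (not_mr1_b cs)
    · exact absurd h1y (not_bruhat_le_of_length (word_ne' cs [0,2] [2] (by decide)) (by simp))
    · exact absurd h1y (not_bruhat_le_of_length (word_ne' cs [0,2] [1,0] (by decide)) (by simp))
    · left; rfl
    · exact absurd h1y (not_bruhat_le_of_length (word_ne' cs [0,2] [1,2] (by decide)) (by simp))
    · right; rfl
  · intro hy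
    rcases hy with rfl | rfl
    · exact ⟨mr1_ac cs, Relation.ReflTransGen.refl, le_ac_bac cs⟩
    · exact ⟨mr1_bac cs, le_ac_bac cs, Relation.ReflTransGen.refl⟩

-- atom sets
lemma atoms₁ : AtomSet cs {0} 1 (π [0,1,2]) = {π [1], π [2]} := by
  ext y
  constructor
  · rintro ⟨hmr, ⟨hlt, hmid⟩, hyv⟩
    rcases mem_downset₁ cs hyv with rfl | rfl | rfl | rfl | rfl | rfl | rfl | rfl
    · exact absurd rfl hlt.2
    · exact absurd hmr (not_mr0_a cs)
    · left; rfl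
    · right; rfl
    · exact absurd (hmid (π [0]) ⟨one_bruhat_le cs _, one_ne_word cs [0] (by decide)⟩
        (lt_word cs [0] [0,1] (le_a_ab cs) (by decide))) not_false
    · exact absurd hmr (not_mr0_ac cs)
    · exact absurd (hmid (π [1]) ⟨one_bruhat_le cs _, one_ne_word cs [1] (by decide)⟩
        (lt_word cs [1] [1,2] (le_b_bc cs) (by decide))) not_false
    · exact absurd (hmid (π [1]) ⟨one_bruhat_le cs _, one_ne_word cs [1] (by decide)⟩
        (lt_word cs [1] [0,1,2] (le_b_abc cs) (by decide))) not_false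
  · intro hy
    have hmid : ∀ (i : Fin 3) (z : W), BruhatLT cs 1 z → BruhatLT cs z (π [i]) → False := by
      intro i z h1 h2
      have l1 := bruhat_lt_length h1
      have l2 := bruhat_lt_length h2
      rw [cs.length_one] at l1
      have : cs.length (π [i]) = 1 := by rw [cs.wordProd_singleton, cs.length_simple]
      omega
    rcases hy with rfl | rfl
    · exact ⟨mr0_b cs, ⟨⟨one_bruhat_le cs _, one_ne_word cs [1] (by decide)⟩, hmid 1⟩,
        le_b_abc cs⟩
    · exact ⟨mr0_c cs, ⟨⟨one_bruhat_le cs _, one_ne_word cs [2] (by decide)⟩, hmid 2⟩,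
        le_c_abc cs⟩

lemma atoms₂ : AtomSet cs {1} 1 (π [1,0,2]) = {π [0], π [2]} := by
  ext y
  constructor
  · rintro ⟨hmr, ⟨hlt, hmid⟩, hyv⟩
    rcases mem_downset₂ cs hyv with rfl | rfl | rfl | rfl | rfl | rfl | rfl | rfl
    · exact absurd rfl hlt.2
    · left; rfl
    · exact absurd hmr (not_mr1_b cs)
    · right; rfl
    · exact absurd (hmid (π [0]) ⟨one_bruhat_le cs _, one_ne_word cs [0] (by decide)⟩
        (lt_word cs [0] [1,0] (le_a_ba cs) (by decide))) not_false
    · exact absurd (hmid (π [0]) ⟨one_bruhat_le cs _, one_ne_word cs [0] (by decide)⟩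
        (lt_word cs [0] [0,2] (le_a_ac cs) (by decide))) not_false
    · exact absurd (hmid (π [2]) ⟨one_bruhat_le cs _, one_ne_word cs [2] (by decide)⟩
        (lt_word cs [2] [1,2] (le_c_bc cs) (by decide))) not_false
    · exact absurd (hmid (π [0]) ⟨one_bruhat_le cs _, one_ne_word cs [0] (by decide)⟩
        (lt_word cs [0] [1,0,2] (le_a_bac cs) (by decide))) not_false
  · intro hy
    have hmid : ∀ (i : Fin 3) (z : W), BruhatLT cs 1 z → BruhatLT cs z (π [i]) → False := by
      intro i z h1 h2
      have l1 := bruhat_lt_length h1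
      have l2 := bruhat_lt_length h2
      rw [cs.length_one] at l1
      have : cs.length (π [i]) = 1 := by rw [cs.wordProd_singleton, cs.length_simple]
      omega
    rcases hy with rfl | rfl
    · exact ⟨mr1_a cs, ⟨⟨one_bruhat_le cs _, one_ne_word cs [0] (by decide)⟩, hmid 0⟩,
        le_a_bac cs⟩
    · exact ⟨mr1_c cs, ⟨⟨one_bruhat_le cs _, one_ne_word cs [2] (by decide)⟩, hmid 2⟩,
        le_c_bac cs⟩

end Sets
section RPoly

open Polynomial

variable {W : Type*} [Group W] (cs : CoxeterSystem (CoxeterMatrix.Aₙ 3) W)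

local prefix:100 "π" => cs.wordProd

variable {Rp : W → W → Polynomial ℤ}

-- ============ case J = {0}, v = s₀s₁s₂ ============

lemma R1_e_b (hR : IsParaRFamily cs {0} (-1) Rp) : Rp 1 (π [1]) = X - 1 := by
  obtain ⟨hz, hd, hrec⟩ := hR
  have e1 : cs.simple 1 * π [1] = 1 := by simp [cs.wordProd_cons]
  have e2 : cs.simple 1 * (1 : W) = π [1] := by simp [cs.wordProd_cons]
  have h := (hrec 1 1 (π [1]) (mr0_e cs) (mr0_b cs) (by rw [e1]; simp)).2.1
    (by rw [e2]; simp) (by rw [e2]; exact mr0_b cs)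
  rw [e1, e2] at h
  rw [hd 1 (mr0_e cs), hz (π [1]) 1 (mr0_b cs) (mr0_e cs)
    (not_bruhat_le_of_length (one_ne_word cs [1] (by decide)).symm (by simp))] at h
  rw [h]; ring

lemma R1_e_c (hR : IsParaRFamily cs {0} (-1) Rp) : Rp 1 (π [2]) = X - 1 := by
  obtain ⟨hz, hd, hrec⟩ := hR
  have e1 : cs.simple 2 * π [2] = 1 := by simp [cs.wordProd_cons]
  have e2 : cs.simple 2 * (1 : W) = π [2] := by simp [cs.wordProd_cons]
  have h := (hrec 2 1 (π [2]) (mr0_e cs) (mr0_c cs) (by rw [e1]; simp)).2.1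
    (by rw [e2]; simp) (by rw [e2]; exact mr0_c cs)
  rw [e1, e2] at h
  rw [hd 1 (mr0_e cs), hz (π [2]) 1 (mr0_c cs) (mr0_e cs)
    (not_bruhat_le_of_length (one_ne_word cs [2] (by decide)).symm (by simp))] at h
  rw [h]; ring

lemma R1_e_ab (hR : IsParaRFamily cs {0} (-1) Rp) : Rp 1 (π [0,1]) = X * (X - 1) := by
  have h0 := R1_e_b cs hR
  obtain ⟨hz, hd, hrec⟩ := hR
  have e1 : cs.simple 0 * π [0,1] = π [1] := by simp [cs.wordProd_cons]
  have e2 : cs.simple 0 * (1 : W) = π [0] := by simp [cs.wordProd_cons]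
  have h := (hrec 0 1 (π [0,1]) (mr0_e cs) (mr0_ab cs) (by rw [e1]; simp)).2.2
    (by rw [e2]; simp) (by rw [e2]; exact not_mr0_a cs)
  rw [e1] at h
  rw [h, h0]; ring

lemma R1_e_bc (hR : IsParaRFamily cs {0} (-1) Rp) : Rp 1 (π [1,2]) = (X - 1) ^ 2 := by
  have h0 := R1_e_c cs hR
  obtain ⟨hz, hd, hrec⟩ := hR
  have e1 : cs.simple 1 * π [1,2] = π [2] := by simp [cs.wordProd_cons]
  have e2 : cs.simple 1 * (1 : W) = π [1] := by simp [cs.wordProd_cons]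
  have h := (hrec 1 1 (π [1,2]) (mr0_e cs) (mr0_bc cs) (by rw [e1]; simp)).2.1
    (by rw [e2]; simp) (by rw [e2]; exact mr0_b cs)
  rw [e1, e2] at h
  rw [hz (π [1]) (π [2]) (mr0_b cs) (mr0_c cs)
    (not_bruhat_le_of_length (word_ne' cs [1] [2] (by decide)) (by simp))] at h
  rw [h, h0]; ring

lemma R1_e_abc (hR : IsParaRFamily cs {0} (-1) Rp) : Rp 1 (π [0,1,2]) = X * (X - 1) ^ 2 := by
  have h0 := R1_e_bc cs hR
  obtain ⟨hz, hd, hrec⟩ := hR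
  have e1 : cs.simple 0 * π [0,1,2] = π [1,2] := by simp [cs.wordProd_cons]
  have e2 : cs.simple 0 * (1 : W) = π [0] := by simp [cs.wordProd_cons]
  have h := (hrec 0 1 (π [0,1,2]) (mr0_e cs) (mr0_abc cs) (by rw [e1]; simp)).2.2
    (by rw [e2]; simp) (by rw [e2]; exact not_mr0_a cs)
  rw [e1] at h
  rw [h, h0]; ring

lemma R1_b_ab (hR : IsParaRFamily cs {0} (-1) Rp) : Rp (π [1]) (π [0,1]) = X - 1 := by
  obtain ⟨hz, hd, hrec⟩ := hR
  have e1 : cs.simple 0 * π [0,1] = π [1] := by simp [cs.wordProd_cons]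
  have e2 : cs.simple 0 * π [1] = π [0,1] := by simp [cs.wordProd_cons]
  have h := (hrec 0 (π [1]) (π [0,1]) (mr0_b cs) (mr0_ab cs) (by rw [e1]; simp)).2.1
    (by rw [e2]; simp) (by rw [e2]; exact mr0_ab cs)
  rw [e1, e2] at h
  rw [hd (π [1]) (mr0_b cs), hz (π [0,1]) (π [1]) (mr0_ab cs) (mr0_b cs)
    (not_bruhat_le_of_length (word_ne' cs [0,1] [1] (by decide)) (by simp))] at h
  rw [h]; ring

lemma R1_b_bc (hR : IsParaRFamily cs {0} (-1) Rp) : Rp (π [1]) (π [1,2]) = X - 1 := by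
  have h0 := R1_e_c cs hR
  obtain ⟨hz, hd, hrec⟩ := hR
  have e1 : cs.simple 1 * π [1,2] = π [2] := by simp [cs.wordProd_cons]
  have e2 : cs.simple 1 * π [1] = 1 := by simp [cs.wordProd_cons]
  have h := (hrec 1 (π [1]) (π [1,2]) (mr0_b cs) (mr0_bc cs) (by rw [e1]; simp)).1
    (by rw [e2]; simp)
  rw [e1, e2] at h
  rw [h, h0]

lemma R1_b_abc (hR : IsParaRFamily cs {0} (-1) Rp) :
    Rp (π [1]) (π [0,1,2]) = (X - 1) ^ 2 := by
  have h0 := R1_b_bc cs hR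
  obtain ⟨hz, hd, hrec⟩ := hR
  have e1 : cs.simple 0 * π [0,1,2] = π [1,2] := by simp [cs.wordProd_cons]
  have e2 : cs.simple 0 * π [1] = π [0,1] := by simp [cs.wordProd_cons]
  have h := (hrec 0 (π [1]) (π [0,1,2]) (mr0_b cs) (mr0_abc cs) (by rw [e1]; simp)).2.1
    (by rw [e2]; simp) (by rw [e2]; exact mr0_ab cs)
  rw [e1, e2] at h
  rw [hz (π [0,1]) (π [1,2]) (mr0_ab cs) (mr0_bc cs)
    (not_bruhat_le_of_length (word_ne' cs [0,1] [1,2] (by decide)) (by simp))] at h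
  rw [h, h0]; ring

lemma R1_c_bc (hR : IsParaRFamily cs {0} (-1) Rp) : Rp (π [2]) (π [1,2]) = X - 1 := by
  obtain ⟨hz, hd, hrec⟩ := hR
  have e1 : cs.simple 1 * π [1,2] = π [2] := by simp [cs.wordProd_cons]
  have e2 : cs.simple 1 * π [2] = π [1,2] := by simp [cs.wordProd_cons]
  have h := (hrec 1 (π [2]) (π [1,2]) (mr0_c cs) (mr0_bc cs) (by rw [e1]; simp)).2.1
    (by rw [e2]; simp) (by rw [e2]; exact mr0_bc cs)
  rw [e1, e2] at h
  rw [hd (π [2]) (mr0_c cs), hz (π [1,2]) (π [2]) (mr0_bc cs) (mr0_c cs)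
    (not_bruhat_le_of_length (word_ne' cs [1,2] [2] (by decide)) (by simp))] at h
  rw [h]; ring

lemma R1_c_abc (hR : IsParaRFamily cs {0} (-1) Rp) :
    Rp (π [2]) (π [0,1,2]) = X * (X - 1) := by
  have h0 := R1_c_bc cs hR
  obtain ⟨hz, hd, hrec⟩ := hR
  have e1 : cs.simple 0 * π [0,1,2] = π [1,2] := by simp [cs.wordProd_cons]
  have e2 : cs.simple 0 * π [2] = π [0,2] := by simp [cs.wordProd_cons]
  have h := (hrec 0 (π [2]) (π [0,1,2]) (mr0_c cs) (mr0_abc cs) (by rw [e1]; simp)).2.2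
    (by rw [e2]; simp) (by rw [e2]; exact not_mr0_ac cs)
  rw [e1] at h
  rw [h, h0]; ring

lemma R1_ab_abc (hR : IsParaRFamily cs {0} (-1) Rp) :
    Rp (π [0,1]) (π [0,1,2]) = X - 1 := by
  have h0 := R1_b_bc cs hR
  obtain ⟨hz, hd, hrec⟩ := hR
  have e1 : cs.simple 0 * π [0,1,2] = π [1,2] := by simp [cs.wordProd_cons]
  have e2 : cs.simple 0 * π [0,1] = π [1] := by simp [cs.wordProd_cons]
  have h := (hrec 0 (π [0,1]) (π [0,1,2]) (mr0_ab cs) (mr0_abc cs) (by rw [e1]; simp)).1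
    (by rw [e2]; simp)
  rw [e1, e2] at h
  rw [h, h0]

lemma R1_bc_abc (hR : IsParaRFamily cs {0} (-1) Rp) :
    Rp (π [1,2]) (π [0,1,2]) = X - 1 := by
  obtain ⟨hz, hd, hrec⟩ := hR
  have e1 : cs.simple 0 * π [0,1,2] = π [1,2] := by simp [cs.wordProd_cons]
  have e2 : cs.simple 0 * π [1,2] = π [0,1,2] := by simp [cs.wordProd_cons]
  have h := (hrec 0 (π [1,2]) (π [0,1,2]) (mr0_bc cs) (mr0_abc cs) (by rw [e1]; simp)).2.1
    (by rw [e2]; simp) (by rw [e2]; exact mr0_abc cs)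
  rw [e1, e2] at h
  rw [hd (π [1,2]) (mr0_bc cs), hz (π [0,1,2]) (π [1,2]) (mr0_abc cs) (mr0_bc cs)
    (not_bruhat_le_of_length (word_ne' cs [0,1,2] [1,2] (by decide)) (by simp))] at h
  rw [h]; ring

-- ============ case J = {1}, v = s₁s₀s₂ ============

lemma R2_e_a (hR : IsParaRFamily cs {1} (-1) Rp) : Rp 1 (π [0]) = X - 1 := by
  obtain ⟨hz, hd, hrec⟩ := hR
  have e1 : cs.simple 0 * π [0] = 1 := by simp [cs.wordProd_cons]
  have e2 : cs.simple 0 * (1 : W) = π [0] := by simp [cs.wordProd_cons]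
  have h := (hrec 0 1 (π [0]) (mr1_e cs) (mr1_a cs) (by rw [e1]; simp)).2.1
    (by rw [e2]; simp) (by rw [e2]; exact mr1_a cs)
  rw [e1, e2] at h
  rw [hd 1 (mr1_e cs), hz (π [0]) 1 (mr1_a cs) (mr1_e cs)
    (not_bruhat_le_of_length (one_ne_word cs [0] (by decide)).symm (by simp))] at h
  rw [h]; ring

lemma R2_e_c (hR : IsParaRFamily cs {1} (-1) Rp) : Rp 1 (π [2]) = X - 1 := by
  obtain ⟨hz, hd, hrec⟩ := hR
  have e1 : cs.simple 2 * π [2] = 1 := by simp [cs.wordProd_cons]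
  have e2 : cs.simple 2 * (1 : W) = π [2] := by simp [cs.wordProd_cons]
  have h := (hrec 2 1 (π [2]) (mr1_e cs) (mr1_c cs) (by rw [e1]; simp)).2.1
    (by rw [e2]; simp) (by rw [e2]; exact mr1_c cs)
  rw [e1, e2] at h
  rw [hd 1 (mr1_e cs), hz (π [2]) 1 (mr1_c cs) (mr1_e cs)
    (not_bruhat_le_of_length (one_ne_word cs [2] (by decide)).symm (by simp))] at h
  rw [h]; ring

lemma R2_e_ba (hR : IsParaRFamily cs {1} (-1) Rp) : Rp 1 (π [1,0]) = X * (X - 1) := by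
  have h0 := R2_e_a cs hR
  obtain ⟨hz, hd, hrec⟩ := hR
  have e1 : cs.simple 1 * π [1,0] = π [0] := by simp [cs.wordProd_cons]
  have e2 : cs.simple 1 * (1 : W) = π [1] := by simp [cs.wordProd_cons]
  have h := (hrec 1 1 (π [1,0]) (mr1_e cs) (mr1_ba cs) (by rw [e1]; simp)).2.2
    (by rw [e2]; simp) (by rw [e2]; exact not_mr1_b cs)
  rw [e1] at h
  rw [h, h0]; ring

lemma R2_e_bc (hR : IsParaRFamily cs {1} (-1) Rp) : Rp 1 (π [1,2]) = X * (X - 1) := by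
  have h0 := R2_e_c cs hR
  obtain ⟨hz, hd, hrec⟩ := hR
  have e1 : cs.simple 1 * π [1,2] = π [2] := by simp [cs.wordProd_cons]
  have e2 : cs.simple 1 * (1 : W) = π [1] := by simp [cs.wordProd_cons]
  have h := (hrec 1 1 (π [1,2]) (mr1_e cs) (mr1_bc cs) (by rw [e1]; simp)).2.2
    (by rw [e2]; simp) (by rw [e2]; exact not_mr1_b cs)
  rw [e1] at h
  rw [h, h0]; ring

lemma R2_e_ac (hR : IsParaRFamily cs {1} (-1) Rp) : Rp 1 (π [0,2]) = (X - 1) ^ 2 := by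
  have h0 := R2_e_c cs hR
  obtain ⟨hz, hd, hrec⟩ := hR
  have e1 : cs.simple 0 * π [0,2] = π [2] := by simp [cs.wordProd_cons]
  have e2 : cs.simple 0 * (1 : W) = π [0] := by simp [cs.wordProd_cons]
  have h := (hrec 0 1 (π [0,2]) (mr1_e cs) (mr1_ac cs) (by rw [e1]; simp)).2.1
    (by rw [e2]; simp) (by rw [e2]; exact mr1_a cs)
  rw [e1, e2] at h
  rw [hz (π [0]) (π [2]) (mr1_a cs) (mr1_c cs)
    (not_bruhat_le_of_length (word_ne' cs [0] [2] (by decide)) (by simp))] at h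
  rw [h, h0]; ring

lemma R2_e_bac (hR : IsParaRFamily cs {1} (-1) Rp) :
    Rp 1 (π [1,0,2]) = X * (X - 1) ^ 2 := by
  have h0 := R2_e_ac cs hR
  obtain ⟨hz, hd, hrec⟩ := hR
  have e1 : cs.simple 1 * π [1,0,2] = π [0,2] := by simp [cs.wordProd_cons]
  have e2 : cs.simple 1 * (1 : W) = π [1] := by simp [cs.wordProd_cons]
  have h := (hrec 1 1 (π [1,0,2]) (mr1_e cs) (mr1_bac cs) (by rw [e1]; simp)).2.2
    (by rw [e2]; simp) (by rw [e2]; exact not_mr1_b cs)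
  rw [e1] at h
  rw [h, h0]; ring

lemma R2_a_ba (hR : IsParaRFamily cs {1} (-1) Rp) : Rp (π [0]) (π [1,0]) = X - 1 := by
  obtain ⟨hz, hd, hrec⟩ := hR
  have e1 : cs.simple 1 * π [1,0] = π [0] := by simp [cs.wordProd_cons]
  have e2 : cs.simple 1 * π [0] = π [1,0] := by simp [cs.wordProd_cons]
  have h := (hrec 1 (π [0]) (π [1,0]) (mr1_a cs) (mr1_ba cs) (by rw [e1]; simp)).2.1
    (by rw [e2]; simp) (by rw [e2]; exact mr1_ba cs)
  rw [e1, e2] at h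
  rw [hd (π [0]) (mr1_a cs), hz (π [1,0]) (π [0]) (mr1_ba cs) (mr1_a cs)
    (not_bruhat_le_of_length (word_ne' cs [1,0] [0] (by decide)) (by simp))] at h
  rw [h]; ring

lemma R2_a_ac (hR : IsParaRFamily cs {1} (-1) Rp) : Rp (π [0]) (π [0,2]) = X - 1 := by
  have h0 := R2_e_c cs hR
  obtain ⟨hz, hd, hrec⟩ := hR
  have e1 : cs.simple 0 * π [0,2] = π [2] := by simp [cs.wordProd_cons]
  have e2 : cs.simple 0 * π [0] = 1 := by simp [cs.wordProd_cons]
  have h := (hrec 0 (π [0]) (π [0,2]) (mr1_a cs) (mr1_ac cs) (by rw [e1]; simp)).1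
    (by rw [e2]; simp)
  rw [e1, e2] at h
  rw [h, h0]

lemma R2_a_bac (hR : IsParaRFamily cs {1} (-1) Rp) :
    Rp (π [0]) (π [1,0,2]) = (X - 1) ^ 2 := by
  have h0 := R2_a_ac cs hR
  obtain ⟨hz, hd, hrec⟩ := hR
  have e1 : cs.simple 1 * π [1,0,2] = π [0,2] := by simp [cs.wordProd_cons]
  have e2 : cs.simple 1 * π [0] = π [1,0] := by simp [cs.wordProd_cons]
  have h := (hrec 1 (π [0]) (π [1,0,2]) (mr1_a cs) (mr1_bac cs) (by rw [e1]; simp)).2.1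
    (by rw [e2]; simp) (by rw [e2]; exact mr1_ba cs)
  rw [e1, e2] at h
  rw [hz (π [1,0]) (π [0,2]) (mr1_ba cs) (mr1_ac cs)
    (not_bruhat_le_of_length (word_ne' cs [1,0] [0,2] (by decide)) (by simp))] at h
  rw [h, h0]; ring

lemma R2_c_bc (hR : IsParaRFamily cs {1} (-1) Rp) : Rp (π [2]) (π [1,2]) = X - 1 := by
  obtain ⟨hz, hd, hrec⟩ := hR
  have e1 : cs.simple 1 * π [1,2] = π [2] := by simp [cs.wordProd_cons]
  have e2 : cs.simple 1 * π [2] = π [1,2] := by simp [cs.wordProd_cons]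
  have h := (hrec 1 (π [2]) (π [1,2]) (mr1_c cs) (mr1_bc cs) (by rw [e1]; simp)).2.1
    (by rw [e2]; simp) (by rw [e2]; exact mr1_bc cs)
  rw [e1, e2] at h
  rw [hd (π [2]) (mr1_c cs), hz (π [1,2]) (π [2]) (mr1_bc cs) (mr1_c cs)
    (not_bruhat_le_of_length (word_ne' cs [1,2] [2] (by decide)) (by simp))] at h
  rw [h]; ring

lemma R2_c_ac (hR : IsParaRFamily cs {1} (-1) Rp) : Rp (π [2]) (π [0,2]) = X - 1 := by
  obtain ⟨hz, hd, hrec⟩ := hR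
  have e1 : cs.simple 0 * π [0,2] = π [2] := by simp [cs.wordProd_cons]
  have e2 : cs.simple 0 * π [2] = π [0,2] := by simp [cs.wordProd_cons]
  have h := (hrec 0 (π [2]) (π [0,2]) (mr1_c cs) (mr1_ac cs) (by rw [e1]; simp)).2.1
    (by rw [e2]; simp) (by rw [e2]; exact mr1_ac cs)
  rw [e1, e2] at h
  rw [hd (π [2]) (mr1_c cs), hz (π [0,2]) (π [2]) (mr1_ac cs) (mr1_c cs)
    (not_bruhat_le_of_length (word_ne' cs [0,2] [2] (by decide)) (by simp))] at h
  rw [h]; ring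

lemma R2_c_bac (hR : IsParaRFamily cs {1} (-1) Rp) :
    Rp (π [2]) (π [1,0,2]) = (X - 1) ^ 2 := by
  have h0 := R2_c_ac cs hR
  obtain ⟨hz, hd, hrec⟩ := hR
  have e1 : cs.simple 1 * π [1,0,2] = π [0,2] := by simp [cs.wordProd_cons]
  have e2 : cs.simple 1 * π [2] = π [1,2] := by simp [cs.wordProd_cons]
  have h := (hrec 1 (π [2]) (π [1,0,2]) (mr1_c cs) (mr1_bac cs) (by rw [e1]; simp)).2.1
    (by rw [e2]; simp) (by rw [e2]; exact mr1_bc cs)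
  rw [e1, e2] at h
  rw [hz (π [1,2]) (π [0,2]) (mr1_bc cs) (mr1_ac cs)
    (not_bruhat_le_of_length (word_ne' cs [1,2] [0,2] (by decide)) (by simp))] at h
  rw [h, h0]; ring

lemma R2_ba_bac (hR : IsParaRFamily cs {1} (-1) Rp) :
    Rp (π [1,0]) (π [1,0,2]) = X - 1 := by
  have h0 := R2_a_ac cs hR
  obtain ⟨hz, hd, hrec⟩ := hR
  have e1 : cs.simple 1 * π [1,0,2] = π [0,2] := by simp [cs.wordProd_cons]
  have e2 : cs.simple 1 * π [1,0] = π [0] := by simp [cs.wordProd_cons]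
  have h := (hrec 1 (π [1,0]) (π [1,0,2]) (mr1_ba cs) (mr1_bac cs) (by rw [e1]; simp)).1
    (by rw [e2]; simp)
  rw [e1, e2] at h
  rw [h, h0]

lemma R2_bc_bac (hR : IsParaRFamily cs {1} (-1) Rp) :
    Rp (π [1,2]) (π [1,0,2]) = X - 1 := by
  have h0 := R2_c_ac cs hR
  obtain ⟨hz, hd, hrec⟩ := hR
  have e1 : cs.simple 1 * π [1,0,2] = π [0,2] := by simp [cs.wordProd_cons]
  have e2 : cs.simple 1 * π [1,2] = π [2] := by simp [cs.wordProd_cons]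
  have h := (hrec 1 (π [1,2]) (π [1,0,2]) (mr1_bc cs) (mr1_bac cs) (by rw [e1]; simp)).1
    (by rw [e2]; simp)
  rw [e1, e2] at h
  rw [h, h0]

lemma R2_ac_bac (hR : IsParaRFamily cs {1} (-1) Rp) :
    Rp (π [0,2]) (π [1,0,2]) = X - 1 := by
  obtain ⟨hz, hd, hrec⟩ := hR
  have e1 : cs.simple 1 * π [1,0,2] = π [0,2] := by simp [cs.wordProd_cons]
  have e2 : cs.simple 1 * π [0,2] = π [1,0,2] := by simp [cs.wordProd_cons]
  have h := (hrec 1 (π [0,2]) (π [1,0,2]) (mr1_ac cs) (mr1_bac cs) (by rw [e1]; simp)).2.1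
    (by rw [e2]; simp) (by rw [e2]; exact mr1_bac cs)
  rw [e1, e2] at h
  rw [hd (π [0,2]) (mr1_ac cs), hz (π [1,0,2]) (π [0,2]) (mr1_bac cs) (mr1_ac cs)
    (not_bruhat_le_of_length (word_ne' cs [1,0,2] [0,2] (by decide)) (by simp))] at h
  rw [h]; ring

end RPoly
section PPoly

open Polynomial

variable {W : Type*} [Group W] (cs : CoxeterSystem (CoxeterMatrix.Aₙ 3) W)

local prefix:100 "π" => cs.wordProd

variable {Rp Pp : W → W → Polynomial ℤ}


lemma P1_ab (hR : IsParaRFamily cs {0} (-1) Rp) (hP : IsParaPFamily cs {0} Rp Pp) :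
    Pp (π [0,1]) (π [0,1,2]) = 1 := by

  obtain ⟨pz, pd, pdeg, psum⟩ := hP
  have hdeg := pdeg _ _ (mr0_ab cs) (mr0_abc cs)
    (lt_word cs [0,1] [0,1,2] (le_ab_abc cs) (by decide))
  simp only [len_012, len_01] at hdeg
  have hp : Pp (π [0,1]) (π [0,1,2]) = C ((Pp (π [0,1]) (π [0,1,2])).coeff 0) :=
    Polynomial.eq_C_of_natDegree_eq_zero (by omega)
  have hsum := psum _ _ (mr0_ab cs) (mr0_abc cs) (le_ab_abc cs)
  rw [QI1_ab cs,
    finsum_mem_pair (word_ne' cs [0,1] [0,1,2] (by decide)),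
    hR.2.1 _ (mr0_ab cs), R1_ab_abc cs hR, pd _ (mr0_abc cs)] at hsum
  simp only [len_012, len_01, Nat.reduceSub, one_mul, mul_one] at hsum
  rw [hp, Polynomial.reflect_C] at hsum
  have hc := congrArg (Polynomial.eval 0) hsum
  simp [-CoxeterSystem.wordProd_singleton] at hc
  rw [hp, show ((Pp (π [0,1]) (π [0,1,2])).coeff 0) = 1 by omega]
  exact map_one C


lemma P1_bc (hR : IsParaRFamily cs {0} (-1) Rp) (hP : IsParaPFamily cs {0} Rp Pp) :
    Pp (π [1,2]) (π [0,1,2]) = 1 := by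

  obtain ⟨pz, pd, pdeg, psum⟩ := hP
  have hdeg := pdeg _ _ (mr0_bc cs) (mr0_abc cs)
    (lt_word cs [1,2] [0,1,2] (le_bc_abc cs) (by decide))
  simp only [len_012, len_12] at hdeg
  have hp : Pp (π [1,2]) (π [0,1,2]) = C ((Pp (π [1,2]) (π [0,1,2])).coeff 0) :=
    Polynomial.eq_C_of_natDegree_eq_zero (by omega)
  have hsum := psum _ _ (mr0_bc cs) (mr0_abc cs) (le_bc_abc cs)
  rw [QI1_bc cs,
    finsum_mem_pair (word_ne' cs [1,2] [0,1,2] (by decide)),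
    hR.2.1 _ (mr0_bc cs), R1_bc_abc cs hR, pd _ (mr0_abc cs)] at hsum
  simp only [len_012, len_12, Nat.reduceSub, one_mul, mul_one] at hsum
  rw [hp, Polynomial.reflect_C] at hsum
  have hc := congrArg (Polynomial.eval 0) hsum
  simp [-CoxeterSystem.wordProd_singleton] at hc
  rw [hp, show ((Pp (π [1,2]) (π [0,1,2])).coeff 0) = 1 by omega]
  exact map_one C


lemma P1_b (hR : IsParaRFamily cs {0} (-1) Rp) (hP : IsParaPFamily cs {0} Rp Pp) :
    Pp (π [1]) (π [0,1,2]) = 1 := by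
  have h0 := P1_ab cs hR hP
  have h1 := P1_bc cs hR hP
  obtain ⟨pz, pd, pdeg, psum⟩ := hP
  have hdeg := pdeg _ _ (mr0_b cs) (mr0_abc cs)
    (lt_word cs [1] [0,1,2] (le_b_abc cs) (by decide))
  simp only [len_012, len_1] at hdeg
  have hp : Pp (π [1]) (π [0,1,2]) = C ((Pp (π [1]) (π [0,1,2])).coeff 0) :=
    Polynomial.eq_C_of_natDegree_eq_zero (by omega)
  have hsum := psum _ _ (mr0_b cs) (mr0_abc cs) (le_b_abc cs)
  rw [QI1_b cs,
    finsum_mem_insert _ (by simp only [Set.mem_insert_iff, Set.mem_singleton_iff, not_or]; exact ⟨word_ne' cs [1] [0,1] (by decide), word_ne' cs [1] [1,2] (by decide), word_ne' cs [1] [0,1,2] (by decide)⟩)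
      (((Set.finite_singleton _).insert _).insert _),
    finsum_mem_insert _ (by simp only [Set.mem_insert_iff, Set.mem_singleton_iff, not_or]; exact ⟨word_ne' cs [0,1] [1,2] (by decide), word_ne' cs [0,1] [0,1,2] (by decide)⟩)
      ((Set.finite_singleton _).insert _),
    finsum_mem_pair (word_ne' cs [1,2] [0,1,2] (by decide)),
    hR.2.1 _ (mr0_b cs), R1_b_ab cs hR, R1_b_bc cs hR, R1_b_abc cs hR, pd _ (mr0_abc cs), h0, h1] at hsum
  simp only [len_012, len_1, Nat.reduceSub, one_mul, mul_one] at hsum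
  rw [hp, Polynomial.reflect_C] at hsum
  have hc := congrArg (Polynomial.eval 0) hsum
  simp [-CoxeterSystem.wordProd_singleton] at hc
  rw [hp, show ((Pp (π [1]) (π [0,1,2])).coeff 0) = 1 by omega]
  exact map_one C


lemma P1_c (hR : IsParaRFamily cs {0} (-1) Rp) (hP : IsParaPFamily cs {0} Rp Pp) :
    Pp (π [2]) (π [0,1,2]) = 1 := by
  have h0 := P1_bc cs hR hP
  obtain ⟨pz, pd, pdeg, psum⟩ := hP
  have hdeg := pdeg _ _ (mr0_c cs) (mr0_abc cs)
    (lt_word cs [2] [0,1,2] (le_c_abc cs) (by decide))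
  simp only [len_012, len_2] at hdeg
  have hp : Pp (π [2]) (π [0,1,2]) = C ((Pp (π [2]) (π [0,1,2])).coeff 0) :=
    Polynomial.eq_C_of_natDegree_eq_zero (by omega)
  have hsum := psum _ _ (mr0_c cs) (mr0_abc cs) (le_c_abc cs)
  rw [QI1_c cs,
    finsum_mem_insert _ (by simp only [Set.mem_insert_iff, Set.mem_singleton_iff, not_or]; exact ⟨word_ne' cs [2] [1,2] (by decide), word_ne' cs [2] [0,1,2] (by decide)⟩)
      ((Set.finite_singleton _).insert _),
    finsum_mem_pair (word_ne' cs [1,2] [0,1,2] (by decide)),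
    hR.2.1 _ (mr0_c cs), R1_c_bc cs hR, R1_c_abc cs hR, pd _ (mr0_abc cs), h0] at hsum
  simp only [len_012, len_2, Nat.reduceSub, one_mul, mul_one] at hsum
  rw [hp, Polynomial.reflect_C] at hsum
  have hc := congrArg (Polynomial.eval 0) hsum
  simp [-CoxeterSystem.wordProd_singleton] at hc
  rw [hp, show ((Pp (π [2]) (π [0,1,2])).coeff 0) = 1 by omega]
  exact map_one C


lemma P2_ba (hR : IsParaRFamily cs {1} (-1) Rp) (hP : IsParaPFamily cs {1} Rp Pp) :
    Pp (π [1,0]) (π [1,0,2]) = 1 := by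

  obtain ⟨pz, pd, pdeg, psum⟩ := hP
  have hdeg := pdeg _ _ (mr1_ba cs) (mr1_bac cs)
    (lt_word cs [1,0] [1,0,2] (le_ba_bac cs) (by decide))
  simp only [len_102, len_10] at hdeg
  have hp : Pp (π [1,0]) (π [1,0,2]) = C ((Pp (π [1,0]) (π [1,0,2])).coeff 0) :=
    Polynomial.eq_C_of_natDegree_eq_zero (by omega)
  have hsum := psum _ _ (mr1_ba cs) (mr1_bac cs) (le_ba_bac cs)
  rw [QI2_ba cs,
    finsum_mem_pair (word_ne' cs [1,0] [1,0,2] (by decide)),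
    hR.2.1 _ (mr1_ba cs), R2_ba_bac cs hR, pd _ (mr1_bac cs)] at hsum
  simp only [len_102, len_10, Nat.reduceSub, one_mul, mul_one] at hsum
  rw [hp, Polynomial.reflect_C] at hsum
  have hc := congrArg (Polynomial.eval 0) hsum
  simp [-CoxeterSystem.wordProd_singleton] at hc
  rw [hp, show ((Pp (π [1,0]) (π [1,0,2])).coeff 0) = 1 by omega]
  exact map_one C


lemma P2_bc (hR : IsParaRFamily cs {1} (-1) Rp) (hP : IsParaPFamily cs {1} Rp Pp) :
    Pp (π [1,2]) (π [1,0,2]) = 1 := by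

  obtain ⟨pz, pd, pdeg, psum⟩ := hP
  have hdeg := pdeg _ _ (mr1_bc cs) (mr1_bac cs)
    (lt_word cs [1,2] [1,0,2] (le_bc_bac cs) (by decide))
  simp only [len_102, len_12] at hdeg
  have hp : Pp (π [1,2]) (π [1,0,2]) = C ((Pp (π [1,2]) (π [1,0,2])).coeff 0) :=
    Polynomial.eq_C_of_natDegree_eq_zero (by omega)
  have hsum := psum _ _ (mr1_bc cs) (mr1_bac cs) (le_bc_bac cs)
  rw [QI2_bc cs,
    finsum_mem_pair (word_ne' cs [1,2] [1,0,2] (by decide)),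
    hR.2.1 _ (mr1_bc cs), R2_bc_bac cs hR, pd _ (mr1_bac cs)] at hsum
  simp only [len_102, len_12, Nat.reduceSub, one_mul, mul_one] at hsum
  rw [hp, Polynomial.reflect_C] at hsum
  have hc := congrArg (Polynomial.eval 0) hsum
  simp [-CoxeterSystem.wordProd_singleton] at hc
  rw [hp, show ((Pp (π [1,2]) (π [1,0,2])).coeff 0) = 1 by omega]
  exact map_one C


lemma P2_ac (hR : IsParaRFamily cs {1} (-1) Rp) (hP : IsParaPFamily cs {1} Rp Pp) :
    Pp (π [0,2]) (π [1,0,2]) = 1 := by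

  obtain ⟨pz, pd, pdeg, psum⟩ := hP
  have hdeg := pdeg _ _ (mr1_ac cs) (mr1_bac cs)
    (lt_word cs [0,2] [1,0,2] (le_ac_bac cs) (by decide))
  simp only [len_102, len_02] at hdeg
  have hp : Pp (π [0,2]) (π [1,0,2]) = C ((Pp (π [0,2]) (π [1,0,2])).coeff 0) :=
    Polynomial.eq_C_of_natDegree_eq_zero (by omega)
  have hsum := psum _ _ (mr1_ac cs) (mr1_bac cs) (le_ac_bac cs)
  rw [QI2_ac cs,
    finsum_mem_pair (word_ne' cs [0,2] [1,0,2] (by decide)),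
    hR.2.1 _ (mr1_ac cs), R2_ac_bac cs hR, pd _ (mr1_bac cs)] at hsum
  simp only [len_102, len_02, Nat.reduceSub, one_mul, mul_one] at hsum
  rw [hp, Polynomial.reflect_C] at hsum
  have hc := congrArg (Polynomial.eval 0) hsum
  simp [-CoxeterSystem.wordProd_singleton] at hc
  rw [hp, show ((Pp (π [0,2]) (π [1,0,2])).coeff 0) = 1 by omega]
  exact map_one C


lemma P2_a (hR : IsParaRFamily cs {1} (-1) Rp) (hP : IsParaPFamily cs {1} Rp Pp) :
    Pp (π [0]) (π [1,0,2]) = 1 := by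
  have h0 := P2_ba cs hR hP
  have h1 := P2_ac cs hR hP
  obtain ⟨pz, pd, pdeg, psum⟩ := hP
  have hdeg := pdeg _ _ (mr1_a cs) (mr1_bac cs)
    (lt_word cs [0] [1,0,2] (le_a_bac cs) (by decide))
  simp only [len_102, len_0] at hdeg
  have hp : Pp (π [0]) (π [1,0,2]) = C ((Pp (π [0]) (π [1,0,2])).coeff 0) :=
    Polynomial.eq_C_of_natDegree_eq_zero (by omega)
  have hsum := psum _ _ (mr1_a cs) (mr1_bac cs) (le_a_bac cs)
  rw [QI2_a cs,
    finsum_mem_insert _ (by simp only [Set.mem_insert_iff, Set.mem_singleton_iff, not_or]; exact ⟨word_ne' cs [0] [1,0] (by decide), word_ne' cs [0] [0,2] (by decide), word_ne' cs [0] [1,0,2] (by decide)⟩)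
      (((Set.finite_singleton _).insert _).insert _),
    finsum_mem_insert _ (by simp only [Set.mem_insert_iff, Set.mem_singleton_iff, not_or]; exact ⟨word_ne' cs [1,0] [0,2] (by decide), word_ne' cs [1,0] [1,0,2] (by decide)⟩)
      ((Set.finite_singleton _).insert _),
    finsum_mem_pair (word_ne' cs [0,2] [1,0,2] (by decide)),
    hR.2.1 _ (mr1_a cs), R2_a_ba cs hR, R2_a_ac cs hR, R2_a_bac cs hR, pd _ (mr1_bac cs), h0, h1] at hsum
  simp only [len_102, len_0, Nat.reduceSub, one_mul, mul_one] at hsum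
  rw [hp, Polynomial.reflect_C] at hsum
  have hc := congrArg (Polynomial.eval 0) hsum
  simp [-CoxeterSystem.wordProd_singleton] at hc
  rw [hp, show ((Pp (π [0]) (π [1,0,2])).coeff 0) = 1 by omega]
  exact map_one C


lemma P2_c (hR : IsParaRFamily cs {1} (-1) Rp) (hP : IsParaPFamily cs {1} Rp Pp) :
    Pp (π [2]) (π [1,0,2]) = 1 := by
  have h0 := P2_bc cs hR hP
  have h1 := P2_ac cs hR hP
  obtain ⟨pz, pd, pdeg, psum⟩ := hP
  have hdeg := pdeg _ _ (mr1_c cs) (mr1_bac cs)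
    (lt_word cs [2] [1,0,2] (le_c_bac cs) (by decide))
  simp only [len_102, len_2] at hdeg
  have hp : Pp (π [2]) (π [1,0,2]) = C ((Pp (π [2]) (π [1,0,2])).coeff 0) :=
    Polynomial.eq_C_of_natDegree_eq_zero (by omega)
  have hsum := psum _ _ (mr1_c cs) (mr1_bac cs) (le_c_bac cs)
  rw [QI2_c cs,
    finsum_mem_insert _ (by simp only [Set.mem_insert_iff, Set.mem_singleton_iff, not_or]; exact ⟨word_ne' cs [2] [1,2] (by decide), word_ne' cs [2] [0,2] (by decide), word_ne' cs [2] [1,0,2] (by decide)⟩)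
      (((Set.finite_singleton _).insert _).insert _),
    finsum_mem_insert _ (by simp only [Set.mem_insert_iff, Set.mem_singleton_iff, not_or]; exact ⟨word_ne' cs [1,2] [0,2] (by decide), word_ne' cs [1,2] [1,0,2] (by decide)⟩)
      ((Set.finite_singleton _).insert _),
    finsum_mem_pair (word_ne' cs [0,2] [1,0,2] (by decide)),
    hR.2.1 _ (mr1_c cs), R2_c_bc cs hR, R2_c_ac cs hR, R2_c_bac cs hR, pd _ (mr1_bac cs), h0, h1] at hsum
  simp only [len_102, len_2, Nat.reduceSub, one_mul, mul_one] at hsum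
  rw [hp, Polynomial.reflect_C] at hsum
  have hc := congrArg (Polynomial.eval 0) hsum
  simp [-CoxeterSystem.wordProd_singleton] at hc
  rw [hp, show ((Pp (π [2]) (π [1,0,2])).coeff 0) = 1 by omega]
  exact map_one C


lemma P1_e (hR : IsParaRFamily cs {0} (-1) Rp) (hP : IsParaPFamily cs {0} Rp Pp) :
    Pp 1 (π [0,1,2]) = 1 := by
  have h0 := P1_b cs hR hP
  have h1 := P1_c cs hR hP
  have h2 := P1_ab cs hR hP
  have h3 := P1_bc cs hR hP
  obtain ⟨pz, pd, pdeg, psum⟩ := hP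
  have hdeg := pdeg _ _ (mr0_e cs) (mr0_abc cs)
    ⟨one_bruhat_le cs _, one_ne_word cs [0,1,2] (by decide)⟩
  simp only [len_012, len_one] at hdeg
  have hp : Pp 1 (π [0,1,2]) =
      C ((Pp 1 (π [0,1,2])).coeff 1) * X + C ((Pp 1 (π [0,1,2])).coeff 0) :=
    Polynomial.eq_X_add_C_of_natDegree_le_one (by omega)
  have hsum := psum _ _ (mr0_e cs) (mr0_abc cs) (one_bruhat_le cs _)
  rw [QI1_e cs,
    finsum_mem_insert _ (by simp only [Set.mem_insert_iff, Set.mem_singleton_iff, not_or]; exact ⟨one_ne_word cs [1] (by decide), one_ne_word cs [2] (by decide), one_ne_word cs [0,1] (by decide), one_ne_word cs [1,2] (by decide), one_ne_word cs [0,1,2] (by decide)⟩)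
      (((((Set.finite_singleton _).insert _).insert _).insert _).insert _),
    finsum_mem_insert _ (by simp only [Set.mem_insert_iff, Set.mem_singleton_iff, not_or]; exact ⟨word_ne' cs [1] [2] (by decide), word_ne' cs [1] [0,1] (by decide), word_ne' cs [1] [1,2] (by decide), word_ne' cs [1] [0,1,2] (by decide)⟩)
      ((((Set.finite_singleton _).insert _).insert _).insert _),
    finsum_mem_insert _ (by simp only [Set.mem_insert_iff, Set.mem_singleton_iff, not_or]; exact ⟨word_ne' cs [2] [0,1] (by decide), word_ne' cs [2] [1,2] (by decide), word_ne' cs [2] [0,1,2] (by decide)⟩)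
      (((Set.finite_singleton _).insert _).insert _),
    finsum_mem_insert _ (by simp only [Set.mem_insert_iff, Set.mem_singleton_iff, not_or]; exact ⟨word_ne' cs [0,1] [1,2] (by decide), word_ne' cs [0,1] [0,1,2] (by decide)⟩)
      ((Set.finite_singleton _).insert _),
    finsum_mem_pair (word_ne' cs [1,2] [0,1,2] (by decide)),
    hR.2.1 _ (mr0_e cs), R1_e_b cs hR, R1_e_c cs hR, R1_e_ab cs hR, R1_e_bc cs hR, R1_e_abc cs hR, pd _ (mr0_abc cs), h0, h1, h2, h3] at hsum
  simp only [len_012, len_one, Nat.reduceSub, one_mul, mul_one] at hsum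
  rw [hp, Polynomial.reflect_add, Polynomial.reflect_C,
    show (X : Polynomial ℤ) = X ^ 1 from (pow_one X).symm,
    Polynomial.reflect_C_mul_X_pow,
    show Polynomial.revAt 3 1 = 2 from rfl] at hsum
  have h0 := congrArg (Polynomial.eval 0) hsum
  have h1 := congrArg (Polynomial.eval (-1)) hsum
  simp [-CoxeterSystem.wordProd_singleton] at h0 h1
  rw [hp, show ((Pp 1 (π [0,1,2])).coeff 0) = 1 by omega,
    show ((Pp 1 (π [0,1,2])).coeff 1) = 0 by omega]
  simp


lemma P2_e (hR : IsParaRFamily cs {1} (-1) Rp) (hP : IsParaPFamily cs {1} Rp Pp) :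
    Pp 1 (π [1,0,2]) = 1 + X := by
  have h0 := P2_a cs hR hP
  have h1 := P2_c cs hR hP
  have h2 := P2_ba cs hR hP
  have h3 := P2_bc cs hR hP
  have h4 := P2_ac cs hR hP
  obtain ⟨pz, pd, pdeg, psum⟩ := hP
  have hdeg := pdeg _ _ (mr1_e cs) (mr1_bac cs)
    ⟨one_bruhat_le cs _, one_ne_word cs [1,0,2] (by decide)⟩
  simp only [len_102, len_one] at hdeg
  have hp : Pp 1 (π [1,0,2]) =
      C ((Pp 1 (π [1,0,2])).coeff 1) * X + C ((Pp 1 (π [1,0,2])).coeff 0) :=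
    Polynomial.eq_X_add_C_of_natDegree_le_one (by omega)
  have hsum := psum _ _ (mr1_e cs) (mr1_bac cs) (one_bruhat_le cs _)
  rw [QI2_e cs,
    finsum_mem_insert _ (by simp only [Set.mem_insert_iff, Set.mem_singleton_iff, not_or]; exact ⟨one_ne_word cs [0] (by decide), one_ne_word cs [2] (by decide), one_ne_word cs [1,0] (by decide), one_ne_word cs [1,2] (by decide), one_ne_word cs [0,2] (by decide), one_ne_word cs [1,0,2] (by decide)⟩)
      ((((((Set.finite_singleton _).insert _).insert _).insert _).insert _).insert _),
    finsum_mem_insert _ (by simp only [Set.mem_insert_iff, Set.mem_singleton_iff, not_or]; exact ⟨word_ne' cs [0] [2] (by decide), word_ne' cs [0] [1,0] (by decide), word_ne' cs [0] [1,2] (by decide), word_ne' cs [0] [0,2] (by decide), word_ne' cs [0] [1,0,2] (by decide)⟩)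
      (((((Set.finite_singleton _).insert _).insert _).insert _).insert _),
    finsum_mem_insert _ (by simp only [Set.mem_insert_iff, Set.mem_singleton_iff, not_or]; exact ⟨word_ne' cs [2] [1,0] (by decide), word_ne' cs [2] [1,2] (by decide), word_ne' cs [2] [0,2] (by decide), word_ne' cs [2] [1,0,2] (by decide)⟩)
      ((((Set.finite_singleton _).insert _).insert _).insert _),
    finsum_mem_insert _ (by simp only [Set.mem_insert_iff, Set.mem_singleton_iff, not_or]; exact ⟨word_ne' cs [1,0] [1,2] (by decide), word_ne' cs [1,0] [0,2] (by decide), word_ne' cs [1,0] [1,0,2] (by decide)⟩)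
      (((Set.finite_singleton _).insert _).insert _),
    finsum_mem_insert _ (by simp only [Set.mem_insert_iff, Set.mem_singleton_iff, not_or]; exact ⟨word_ne' cs [1,2] [0,2] (by decide), word_ne' cs [1,2] [1,0,2] (by decide)⟩)
      ((Set.finite_singleton _).insert _),
    finsum_mem_pair (word_ne' cs [0,2] [1,0,2] (by decide)),
    hR.2.1 _ (mr1_e cs), R2_e_a cs hR, R2_e_c cs hR, R2_e_ba cs hR, R2_e_bc cs hR, R2_e_ac cs hR, R2_e_bac cs hR, pd _ (mr1_bac cs), h0, h1, h2, h3, h4] at hsum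
  simp only [len_102, len_one, Nat.reduceSub, one_mul, mul_one] at hsum
  rw [hp, Polynomial.reflect_add, Polynomial.reflect_C,
    show (X : Polynomial ℤ) = X ^ 1 from (pow_one X).symm,
    Polynomial.reflect_C_mul_X_pow,
    show Polynomial.revAt 3 1 = 2 from rfl] at hsum
  have h0 := congrArg (Polynomial.eval 0) hsum
  have h1 := congrArg (Polynomial.eval (-1)) hsum
  simp [-CoxeterSystem.wordProd_singleton] at h0 h1
  rw [hp, show ((Pp 1 (π [1,0,2])).coeff 0) = 1 by omega,
    show ((Pp 1 (π [1,0,2])).coeff 1) = 1 by omega]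
  simp [add_comm]


end PPoly
section Boolean

variable {W : Type*} [Group W]

open Classical in
/-- labelling of the interval `[e, s₀s₁s₂]` by subsets of `Fin 3` -/
noncomputable def F1 (cs : CoxeterSystem (CoxeterMatrix.Aₙ 3) W) : W → Finset (Fin 3) := fun y =>
  if y = cs.wordProd [0] then {0}
  else if y = cs.wordProd [1] then {1}
  else if y = cs.wordProd [2] then {2}
  else if y = cs.wordProd [0,1] then {0,1}
  else if y = cs.wordProd [0,2] then {0,2}
  else if y = cs.wordProd [1,2] then {1,2}
  else if y = cs.wordProd [0,1,2] then Finset.univ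
  else ∅

open Classical in
/-- labelling of the interval `[e, s₁s₀s₂]` by subsets of `Fin 3` -/
noncomputable def F2 (cs : CoxeterSystem (CoxeterMatrix.Aₙ 3) W) : W → Finset (Fin 3) := fun y =>
  if y = cs.wordProd [0] then {0}
  else if y = cs.wordProd [1] then {1}
  else if y = cs.wordProd [2] then {2}
  else if y = cs.wordProd [1,0] then {0,1}
  else if y = cs.wordProd [0,2] then {0,2}
  else if y = cs.wordProd [1,2] then {1,2}
  else if y = cs.wordProd [1,0,2] then Finset.univ
  else ∅

variable (cs : CoxeterSystem (CoxeterMatrix.Aₙ 3) W)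

local prefix:100 "π" => cs.wordProd

lemma F1_e : F1 cs 1 = ∅ := by
  unfold F1
  rw [if_neg (one_ne_word cs [0] (by decide)), if_neg (one_ne_word cs [1] (by decide)),
    if_neg (one_ne_word cs [2] (by decide)), if_neg (one_ne_word cs [0,1] (by decide)),
    if_neg (one_ne_word cs [0,2] (by decide)), if_neg (one_ne_word cs [1,2] (by decide)),
    if_neg (one_ne_word cs [0,1,2] (by decide))]

lemma F1_a : F1 cs (π [0]) = {0} := by unfold F1; rw [if_pos rfl]

lemma F1_b : F1 cs (π [1]) = {1} := by
  unfold F1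
  rw [if_neg (word_ne' cs [1] [0] (by decide)), if_pos rfl]

lemma F1_c : F1 cs (π [2]) = {2} := by
  unfold F1
  rw [if_neg (word_ne' cs [2] [0] (by decide)), if_neg (word_ne' cs [2] [1] (by decide)),
    if_pos rfl]

lemma F1_ab : F1 cs (π [0,1]) = {0,1} := by
  unfold F1
  rw [if_neg (word_ne' cs [0,1] [0] (by decide)), if_neg (word_ne' cs [0,1] [1] (by decide)),
    if_neg (word_ne' cs [0,1] [2] (by decide)), if_pos rfl]

lemma F1_ac : F1 cs (π [0,2]) = {0,2} := by
  unfold F1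
  rw [if_neg (word_ne' cs [0,2] [0] (by decide)), if_neg (word_ne' cs [0,2] [1] (by decide)),
    if_neg (word_ne' cs [0,2] [2] (by decide)), if_neg (word_ne' cs [0,2] [0,1] (by decide)),
    if_pos rfl]

lemma F1_bc : F1 cs (π [1,2]) = {1,2} := by
  unfold F1
  rw [if_neg (word_ne' cs [1,2] [0] (by decide)), if_neg (word_ne' cs [1,2] [1] (by decide)),
    if_neg (word_ne' cs [1,2] [2] (by decide)), if_neg (word_ne' cs [1,2] [0,1] (by decide)),
    if_neg (word_ne' cs [1,2] [0,2] (by decide)), if_pos rfl]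

lemma F1_abc : F1 cs (π [0,1,2]) = Finset.univ := by
  unfold F1
  rw [if_neg (word_ne' cs [0,1,2] [0] (by decide)), if_neg (word_ne' cs [0,1,2] [1] (by decide)),
    if_neg (word_ne' cs [0,1,2] [2] (by decide)), if_neg (word_ne' cs [0,1,2] [0,1] (by decide)),
    if_neg (word_ne' cs [0,1,2] [0,2] (by decide)), if_neg (word_ne' cs [0,1,2] [1,2] (by decide)),
    if_pos rfl]

lemma F2_e : F2 cs 1 = ∅ := by
  unfold F2
  rw [if_neg (one_ne_word cs [0] (by decide)), if_neg (one_ne_word cs [1] (by decide)),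
    if_neg (one_ne_word cs [2] (by decide)), if_neg (one_ne_word cs [1,0] (by decide)),
    if_neg (one_ne_word cs [0,2] (by decide)), if_neg (one_ne_word cs [1,2] (by decide)),
    if_neg (one_ne_word cs [1,0,2] (by decide))]

lemma F2_a : F2 cs (π [0]) = {0} := by unfold F2; rw [if_pos rfl]

lemma F2_b : F2 cs (π [1]) = {1} := by
  unfold F2
  rw [if_neg (word_ne' cs [1] [0] (by decide)), if_pos rfl]

lemma F2_c : F2 cs (π [2]) = {2} := by
  unfold F2
  rw [if_neg (word_ne' cs [2] [0] (by decide)), if_neg (word_ne' cs [2] [1] (by decide)),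
    if_pos rfl]

lemma F2_ba : F2 cs (π [1,0]) = {0,1} := by
  unfold F2
  rw [if_neg (word_ne' cs [1,0] [0] (by decide)), if_neg (word_ne' cs [1,0] [1] (by decide)),
    if_neg (word_ne' cs [1,0] [2] (by decide)), if_pos rfl]

lemma F2_ac : F2 cs (π [0,2]) = {0,2} := by
  unfold F2
  rw [if_neg (word_ne' cs [0,2] [0] (by decide)), if_neg (word_ne' cs [0,2] [1] (by decide)),
    if_neg (word_ne' cs [0,2] [2] (by decide)), if_neg (word_ne' cs [0,2] [1,0] (by decide)),
    if_pos rfl]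

lemma F2_bc : F2 cs (π [1,2]) = {1,2} := by
  unfold F2
  rw [if_neg (word_ne' cs [1,2] [0] (by decide)), if_neg (word_ne' cs [1,2] [1] (by decide)),
    if_neg (word_ne' cs [1,2] [2] (by decide)), if_neg (word_ne' cs [1,2] [1,0] (by decide)),
    if_neg (word_ne' cs [1,2] [0,2] (by decide)), if_pos rfl]

lemma F2_bac : F2 cs (π [1,0,2]) = Finset.univ := by
  unfold F2
  rw [if_neg (word_ne' cs [1,0,2] [0] (by decide)), if_neg (word_ne' cs [1,0,2] [1] (by decide)),
    if_neg (word_ne' cs [1,0,2] [2] (by decide)), if_neg (word_ne' cs [1,0,2] [1,0] (by decide)),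
    if_neg (word_ne' cs [1,0,2] [0,2] (by decide)), if_neg (word_ne' cs [1,0,2] [1,2] (by decide)),
    if_pos rfl]

lemma mem_interval₁ {y : W} (hy : y ∈ BruhatInterval cs 1 (π [0,1,2])) :
    y = 1 ∨ y = π [0] ∨ y = π [1] ∨ y = π [2] ∨
    y = π [0,1] ∨ y = π [0,2] ∨ y = π [1,2] ∨ y = π [0,1,2] := mem_downset₁ cs hy.2

lemma mem_interval₂ {y : W} (hy : y ∈ BruhatInterval cs 1 (π [1,0,2])) :
    y = 1 ∨ y = π [0] ∨ y = π [1] ∨ y = π [2] ∨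
    y = π [1,0] ∨ y = π [0,2] ∨ y = π [1,2] ∨ y = π [1,0,2] := mem_downset₂ cs hy.2

lemma boolean₁ :
    Set.BijOn (fun y => (↑(F1 cs y) : Set (Fin 3))) (BruhatInterval cs 1 (π [0,1,2]))
      Set.univ ∧
    ∀ y ∈ BruhatInterval cs 1 (π [0,1,2]), ∀ y' ∈ BruhatInterval cs 1 (π [0,1,2]),
      (BruhatLE cs y y' ↔ (↑(F1 cs y) : Set (Fin 3)) ⊆ ↑(F1 cs y')) := by
  constructor
  · refine ⟨fun y _ => Set.mem_univ _, ?_, ?_⟩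
    · intro y hy y' hy' hf
      simp only at hf
      have hf' := Finset.coe_injective hf
      rcases mem_interval₁ cs hy with rfl|rfl|rfl|rfl|rfl|rfl|rfl|rfl <;>
        rcases mem_interval₁ cs hy' with rfl|rfl|rfl|rfl|rfl|rfl|rfl|rfl <;>
        first
          | rfl
          | (exact absurd hf' (by
              simp only [F1_e, F1_a, F1_b, F1_c, F1_ab, F1_ac, F1_bc, F1_abc]
              decide))
    · intro S _
      have hdisj : ∀ T : Finset (Fin 3), T = ∅ ∨ T = {0} ∨ T = {1} ∨ T = {2} ∨
          T = {0,1} ∨ T = {0,2} ∨ T = {1,2} ∨ T = Finset.univ := by decide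
      have hS : S = ↑(Set.toFinite S).toFinset := (Set.Finite.coe_toFinset _).symm
      rcases hdisj (Set.toFinite S).toFinset with h|h|h|h|h|h|h|h
      · exact ⟨1, ⟨Relation.ReflTransGen.refl, one_bruhat_le cs _⟩,
          by simp only [F1_e cs]; rw [hS, h]⟩
      · exact ⟨π [0], ⟨one_bruhat_le cs _, le_a_abc cs⟩,
          by simp only [F1_a cs]; rw [hS, h]⟩
      · exact ⟨π [1], ⟨one_bruhat_le cs _, le_b_abc cs⟩,
          by simp only [F1_b cs]; rw [hS, h]⟩
      · exact ⟨π [2], ⟨one_bruhat_le cs _, le_c_abc cs⟩,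
          by simp only [F1_c cs]; rw [hS, h]⟩
      · exact ⟨π [0,1], ⟨one_bruhat_le cs _, le_ab_abc cs⟩,
          by simp only [F1_ab cs]; rw [hS, h]⟩
      · exact ⟨π [0,2], ⟨one_bruhat_le cs _, le_ac_abc cs⟩,
          by simp only [F1_ac cs]; rw [hS, h]⟩
      · exact ⟨π [1,2], ⟨one_bruhat_le cs _, le_bc_abc cs⟩,
          by simp only [F1_bc cs]; rw [hS, h]⟩
      · exact ⟨π [0,1,2], ⟨one_bruhat_le cs _, Relation.ReflTransGen.refl⟩,
          by simp only [F1_abc cs]; rw [hS, h]⟩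
  · intro y hy y' hy'
    rcases mem_interval₁ cs hy with rfl|rfl|rfl|rfl|rfl|rfl|rfl|rfl <;>
      rcases mem_interval₁ cs hy' with rfl|rfl|rfl|rfl|rfl|rfl|rfl|rfl <;>
      simp only [F1_e, F1_a, F1_b, F1_c, F1_ab, F1_ac, F1_bc, F1_abc, Finset.coe_subset] <;>
      first
        | (refine iff_of_true ?_ (by decide)
           first
             | exact Relation.ReflTransGen.refl
             | exact one_bruhat_le cs _
             | exact le_a_ab cs | exact le_a_ac cs | exact le_b_ab cs | exact le_b_bc cs
             | exact le_c_ac cs | exact le_c_bc cs | exact le_ab_abc cs | exact le_ac_abc cs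
             | exact le_bc_abc cs | exact le_a_abc cs | exact le_b_abc cs | exact le_c_abc cs)
        | (refine iff_of_false ?_ (by decide)
           first
             | exact nle_a_bc cs | exact nle_b_ac cs | exact nle_c_ab cs
             | exact not_bruhat_le_of_length ((one_ne_word cs _ (by decide)).symm) (by simp)
             | exact not_bruhat_le_of_length (one_ne_word cs _ (by decide)) (by simp)
             | exact not_bruhat_le_of_length (word_ne' cs _ _ (by decide)) (by simp))

lemma boolean₂ :
    Set.BijOn (fun y => (↑(F2 cs y) : Set (Fin 3))) (BruhatInterval cs 1 (π [1,0,2]))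
      Set.univ ∧
    ∀ y ∈ BruhatInterval cs 1 (π [1,0,2]), ∀ y' ∈ BruhatInterval cs 1 (π [1,0,2]),
      (BruhatLE cs y y' ↔ (↑(F2 cs y) : Set (Fin 3)) ⊆ ↑(F2 cs y')) := by
  constructor
  · refine ⟨fun y _ => Set.mem_univ _, ?_, ?_⟩
    · intro y hy y' hy' hf
      simp only at hf
      have hf' := Finset.coe_injective hf
      rcases mem_interval₂ cs hy with rfl|rfl|rfl|rfl|rfl|rfl|rfl|rfl <;>
        rcases mem_interval₂ cs hy' with rfl|rfl|rfl|rfl|rfl|rfl|rfl|rfl <;>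
        first
          | rfl
          | (exact absurd hf' (by
              simp only [F2_e, F2_a, F2_b, F2_c, F2_ba, F2_ac, F2_bc, F2_bac]
              decide))
    · intro S _
      have hdisj : ∀ T : Finset (Fin 3), T = ∅ ∨ T = {0} ∨ T = {1} ∨ T = {2} ∨
          T = {0,1} ∨ T = {0,2} ∨ T = {1,2} ∨ T = Finset.univ := by decide
      have hS : S = ↑(Set.toFinite S).toFinset := (Set.Finite.coe_toFinset _).symm
      rcases hdisj (Set.toFinite S).toFinset with h|h|h|h|h|h|h|h
      · exact ⟨1, ⟨Relation.ReflTransGen.refl, one_bruhat_le cs _⟩,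
          by simp only [F2_e cs]; rw [hS, h]⟩
      · exact ⟨π [0], ⟨one_bruhat_le cs _, le_a_bac cs⟩,
          by simp only [F2_a cs]; rw [hS, h]⟩
      · exact ⟨π [1], ⟨one_bruhat_le cs _, le_b_bac cs⟩,
          by simp only [F2_b cs]; rw [hS, h]⟩
      · exact ⟨π [2], ⟨one_bruhat_le cs _, le_c_bac cs⟩,
          by simp only [F2_c cs]; rw [hS, h]⟩
      · exact ⟨π [1,0], ⟨one_bruhat_le cs _, le_ba_bac cs⟩,
          by simp only [F2_ba cs]; rw [hS, h]⟩
      · exact ⟨π [0,2], ⟨one_bruhat_le cs _, le_ac_bac cs⟩,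
          by simp only [F2_ac cs]; rw [hS, h]⟩
      · exact ⟨π [1,2], ⟨one_bruhat_le cs _, le_bc_bac cs⟩,
          by simp only [F2_bc cs]; rw [hS, h]⟩
      · exact ⟨π [1,0,2], ⟨one_bruhat_le cs _, Relation.ReflTransGen.refl⟩,
          by simp only [F2_bac cs]; rw [hS, h]⟩
  · intro y hy y' hy'
    rcases mem_interval₂ cs hy with rfl|rfl|rfl|rfl|rfl|rfl|rfl|rfl <;>
      rcases mem_interval₂ cs hy' with rfl|rfl|rfl|rfl|rfl|rfl|rfl|rfl <;>
      simp only [F2_e, F2_a, F2_b, F2_c, F2_ba, F2_ac, F2_bc, F2_bac, Finset.coe_subset] <;>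
      first
        | (refine iff_of_true ?_ (by decide)
           first
             | exact Relation.ReflTransGen.refl
             | exact one_bruhat_le cs _
             | exact le_a_ba cs | exact le_a_ac cs | exact le_b_ba cs | exact le_b_bc cs
             | exact le_c_ac cs | exact le_c_bc cs | exact le_ba_bac cs | exact le_ac_bac cs
             | exact le_bc_bac cs | exact le_a_bac cs | exact le_b_bac cs | exact le_c_bac cs)
        | (refine iff_of_false ?_ (by decide)
           first
             | exact nle_a_bc cs | exact nle_b_ac cs | exact nle_c_ba cs
             | exact not_bruhat_le_of_length ((one_ne_word cs _ (by decide)).symm) (by simp)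
             | exact not_bruhat_le_of_length (one_ne_word cs _ (by decide)) (by simp)
             | exact not_bruhat_le_of_length (word_ne' cs _ _ (by decide)) (by simp))

end Boolean

/-- in `S₄` (type `A₃`), with `v₁ = s₁s₂s₃`, `v₂ = s₂s₁s₃`,
`J₁ = {s₁}`, `J₂ = {s₂}`: both lower intervals are isomorphic to the Boolean
lattice `B₃`, both atom sets have 2 elements, but
`P^{J₁,-1}_{e,v₁} = 1 ≠ 1 + q = P^{J₂,-1}_{e,v₂}`. -/
theorem s4_counterexample {W : Type*} [Group W]
    (cs : CoxeterSystem (CoxeterMatrix.Aₙ 3) W)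
    (v₁ v₂ : W)
    (hv₁ : v₁ = cs.simple 0 * cs.simple 1 * cs.simple 2)
    (hv₂ : v₂ = cs.simple 1 * cs.simple 0 * cs.simple 2)
    (J₁ J₂ : Set (Fin 3)) (hJ₁ : J₁ = {0}) (hJ₂ : J₂ = {1})
    (Rp₁ Pp₁ Rp₂ Pp₂ : W → W → Polynomial ℤ)
    (hRp₁ : IsParaRFamily cs J₁ (-1) Rp₁)
    (hPp₁ : IsParaPFamily cs J₁ Rp₁ Pp₁)
    (hRp₂ : IsParaRFamily cs J₂ (-1) Rp₂)
    (hPp₂ : IsParaPFamily cs J₂ Rp₂ Pp₂) :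
    (∃ f : W → Set (Fin 3),
      Set.BijOn f (BruhatInterval cs 1 v₁) Set.univ ∧
      ∀ y ∈ BruhatInterval cs 1 v₁, ∀ y' ∈ BruhatInterval cs 1 v₁,
        (BruhatLE cs y y' ↔ f y ⊆ f y')) ∧
    (∃ f : W → Set (Fin 3),
      Set.BijOn f (BruhatInterval cs 1 v₂) Set.univ ∧
      ∀ y ∈ BruhatInterval cs 1 v₂, ∀ y' ∈ BruhatInterval cs 1 v₂,
        (BruhatLE cs y y' ↔ f y ⊆ f y')) ∧
    (AtomSet cs J₁ 1 v₁).ncard = 2 ∧ (AtomSet cs J₂ 1 v₂).ncard = 2 ∧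
    Pp₁ 1 v₁ = 1 ∧ Pp₂ 1 v₂ = 1 + X := by
  subst hv₁ hv₂ hJ₁ hJ₂
  have hpi1 : cs.simple 0 * cs.simple 1 * cs.simple 2 = cs.wordProd [0,1,2] := by
    simp [CoxeterSystem.wordProd_cons, mul_assoc]
  have hpi2 : cs.simple 1 * cs.simple 0 * cs.simple 2 = cs.wordProd [1,0,2] := by
    simp [CoxeterSystem.wordProd_cons, mul_assoc]
  rw [hpi1, hpi2]
  refine ⟨⟨_, (boolean₁ cs).1, (boolean₁ cs).2⟩, ⟨_, (boolean₂ cs).1, (boolean₂ cs).2⟩,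
    ?_, ?_, ?_, ?_⟩
  · rw [atoms₁ cs]
    exact Set.ncard_pair (word_ne' cs [1] [2] (by decide))
  · rw [atoms₂ cs]
    exact Set.ncard_pair (word_ne' cs [0] [2] (by decide))
  · exact P1_e cs hRp₁ hPp₁
  · exact P2_e cs hRp₂ hPp₂

end KL
end

section
/- If upper subintervals are taken of a coelementary interval, they remain coelementary: for a coelementary Bruhat interval [u,v] in a symmetric group and any y ∈ [u,v], the interval [y,v] is coelementary. -/
namespace KL

/-- The number of inversions of a permutation, i.e. its Coxeter length in the
symmetric group. -/
def permLength {n : ℕ} (σ : Equiv.Perm (Fin n)) : ℕ :=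
  (Finset.univ.filter fun p : Fin n × Fin n => p.1 < p.2 ∧ σ p.2 < σ p.1).card

/-- Bruhat order on the symmetric group: reflexive-transitive closure of right
multiplication by a transposition that increases length. -/
def PermBruhatLE {n : ℕ} : Equiv.Perm (Fin n) → Equiv.Perm (Fin n) → Prop :=
  Relation.ReflTransGen fun x y => ∃ i j : Fin n, i ≠ j ∧
    y = x * Equiv.swap i j ∧ permLength x < permLength y

def PermBruhatLT {n : ℕ} (x y : Equiv.Perm (Fin n)) : Prop :=
  PermBruhatLE x y ∧ x ≠ y

/-- Covering relation of Bruhat order on the symmetric group. -/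
def PermBruhatCovBy {n : ℕ} (x y : Equiv.Perm (Fin n)) : Prop :=
  PermBruhatLT x y ∧ ∀ z, PermBruhatLT x z → PermBruhatLT z y → False

/-- The Bruhat interval `[u,v]` in a symmetric group. -/
def PermInterval {n : ℕ} (u v : Equiv.Perm (Fin n)) : Set (Equiv.Perm (Fin n)) :=
  {y | PermBruhatLE u y ∧ PermBruhatLE y v}

/-- The interval `[u,v] ⊆ Sₙ` is cosimple if the set
`{eᵢ - eⱼ : i < j, u ≤ v·(i j) ⋖ v}` is linearly independent in `ℝⁿ`. -/
def Cosimple {n : ℕ} (u v : Equiv.Perm (Fin n)) : Prop :=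
  PermBruhatLE u v ∧
  LinearIndependent ℝ ((↑) :
    {w : Fin n → ℝ | ∃ i j : Fin n, i < j ∧
      PermBruhatLE u (v * Equiv.swap i j) ∧
      PermBruhatCovBy (v * Equiv.swap i j) v ∧
      w = Pi.single i (1 : ℝ) - Pi.single j (1 : ℝ)} → (Fin n → ℝ))

/-- A poset isomorphism between Bruhat intervals of symmetric groups. -/
def IsPermIntervalIso {m n : ℕ} (u₁ v₁ : Equiv.Perm (Fin m))
    (u₂ v₂ : Equiv.Perm (Fin n)) (φ : Equiv.Perm (Fin m) → Equiv.Perm (Fin n)) :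
    Prop :=
  Set.BijOn φ (PermInterval u₁ v₁) (PermInterval u₂ v₂) ∧
  ∀ y ∈ PermInterval u₁ v₁, ∀ y' ∈ PermInterval u₁ v₁,
    (PermBruhatLE y y' ↔ PermBruhatLE (φ y) (φ y'))

/-- An interval is coelementary if it is isomorphic as a poset to some
cosimple interval in some symmetric group. -/
def Coelementary {n : ℕ} (u v : Equiv.Perm (Fin n)) : Prop :=
  ∃ (m : ℕ) (u' v' : Equiv.Perm (Fin m))
    (φ : Equiv.Perm (Fin n) → Equiv.Perm (Fin m)),
    Cosimple u' v' ∧ IsPermIntervalIso u v u' v' φ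

lemma permLength_lt_of_le {n : ℕ} {x y : Equiv.Perm (Fin n)}
    (h : PermBruhatLE x y) : x = y ∨ permLength x < permLength y := by
  induction h with
  | refl => exact Or.inl rfl
  | tail _ step ih =>
    obtain ⟨i, j, _, _, hlt⟩ := step
    rcases ih with rfl | ih
    · exact Or.inr hlt
    · exact Or.inr (ih.trans hlt)

lemma permBruhatLE_antisymm {n : ℕ} {x y : Equiv.Perm (Fin n)}
    (hxy : PermBruhatLE x y) (hyx : PermBruhatLE y x) : x = y := by
  rcases permLength_lt_of_le hxy with rfl | h1
  · rfl
  · rcases permLength_lt_of_le hyx with rfl | h2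
    · rfl
    · exact absurd (h1.trans h2) (lt_irrefl _)

/-- upper subintervals of a coelementary interval in a symmetric
group are coelementary. -/
theorem coelementary_upper {n : ℕ} (u v : Equiv.Perm (Fin n))
    (h : Coelementary u v) (y : Equiv.Perm (Fin n)) (hy : y ∈ PermInterval u v) :
    Coelementary y v := by
  obtain ⟨m, u', v', φ, ⟨hu'v', hli⟩, ⟨hbij, hiff⟩⟩ := h
  obtain ⟨huy, hyv⟩ := hy
  have huv : PermBruhatLE u v := huy.trans hyv
  have hu_mem : u ∈ PermInterval u v := ⟨Relation.ReflTransGen.refl, huv⟩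
  have hv_mem : v ∈ PermInterval u v := ⟨huv, Relation.ReflTransGen.refl⟩
  have hy_mem : y ∈ PermInterval u v := ⟨huy, hyv⟩
  have hφy : φ y ∈ PermInterval u' v' := hbij.mapsTo hy_mem
  have hφv : φ v ∈ PermInterval u' v' := hbij.mapsTo hv_mem
  -- φ v = v'
  have hφveq : φ v = v' := by
    obtain ⟨w, hw_mem, hw⟩ := hbij.surjOn ⟨hu'v', Relation.ReflTransGen.refl⟩
    have : PermBruhatLE (φ w) (φ v) := (hiff w hw_mem v hv_mem).mp hw_mem.2
    rw [hw] at this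
    exact (permBruhatLE_antisymm this hφv.2).symm
  refine ⟨m, φ y, v', φ, ⟨hφy.2, ?_⟩, ?_, ?_⟩
  · -- linear independence: subset of the cosimple set for [u', v']
    refine LinearIndepOn.mono (v := id) hli ?_
    rintro w ⟨i, j, hij, hle, hcov, hw⟩
    exact ⟨i, j, hij, hφy.1.trans hle, hcov, hw⟩
  · -- BijOn on the subinterval
    have hsub : PermInterval y v ⊆ PermInterval u v := fun z hz =>
      ⟨huy.trans hz.1, hz.2⟩
    refine ⟨?_, hbij.injOn.mono hsub, ?_⟩
    · intro z hz
      have hz' := hbij.mapsTo (hsub hz)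
      refine ⟨?_, ?_⟩
      · exact (hiff y hy_mem z (hsub hz)).mp hz.1
      · have := (hiff z (hsub hz) v hv_mem).mp hz.2
        rwa [hφveq] at this
    · intro z' hz'
      have hz'' : z' ∈ PermInterval u' v' := ⟨hφy.1.trans hz'.1, hz'.2⟩
      obtain ⟨z, hz_mem, hz⟩ := hbij.surjOn hz''
      refine ⟨z, ⟨?_, hz_mem.2⟩, hz⟩
      have : PermBruhatLE (φ y) (φ z) := by rw [hz]; exact hz'.1
      exact (hiff y hy_mem z hz_mem).mpr this
  · intro a ha b hb
    have hsub : PermInterval y v ⊆ PermInterval u v := fun z hz =>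
      ⟨huy.trans hz.1, hz.2⟩
    exact hiff a (hsub ha) b (hsub hb)

end KL
end
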